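/- arXiv:1202.4045 — 3 statements merged into one kernel-verified Lean document; each statement's English description precedes it below -/
import Mathlib

section
/- Let P be a simple polytope of dimension d > 1 with precisely 2d facets. Then the pairs of complementary vertices of P are pairwise disjoint: if {u, v} and {u, w} are both pairs of complementary vertices of P, then v = w. -/
/-- `P` is a polytope: the convex hull of finitely many points. -/
def IsPolytope {n : ℕ} (P : Set (Fin n → ℝ)) : Prop :=
  ∃ S : Finset (Fin n → ℝ), P = convexHull ℝ (S : Set (Fin n → ℝ))

/-- A face of `P`: the empty set, `P` itself, or the intersection of `P`
with a supporting hyperplane. -/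
def IsFace {n : ℕ} (P F : Set (Fin n → ℝ)) : Prop :=
  F = ∅ ∨ F = P ∨ ∃ (f : (Fin n → ℝ) →ₗ[ℝ] ℝ) (c : ℝ),
    (∀ x ∈ P, f x ≤ c) ∧ F = {x ∈ P | f x = c}

/-- The dimension of a subset of `ℝⁿ`: the rank of its vector span
(i.e., its affine dimension). -/
noncomputable def sdim {n : ℕ} (F : Set (Fin n → ℝ)) : ℕ :=
  Module.finrank ℝ ↥(vectorSpan ℝ F)

/-- A vertex of `P`: a point whose singleton is a (0-dimensional) face of `P`. -/
def IsVertex {n : ℕ} (P : Set (Fin n → ℝ)) (v : Fin n → ℝ) : Prop :=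
  IsFace P {v}

/-- A facet of `P`: a nonempty face of dimension `dim P - 1`. -/
def IsFacet {n : ℕ} (P F : Set (Fin n → ℝ)) : Prop :=
  IsFace P F ∧ F.Nonempty ∧ sdim F + 1 = sdim P

/-- An edge of `P`: a face of dimension 1. -/
def IsEdge {n : ℕ} (P F : Set (Fin n → ℝ)) : Prop :=
  IsFace P F ∧ sdim F = 1

/-- Two vertices are adjacent if they are joined by an edge. -/
def Adjacent {n : ℕ} (P : Set (Fin n → ℝ)) (u v : Fin n → ℝ) : Prop :=
  u ≠ v ∧ ∃ F, IsEdge P F ∧ u ∈ F ∧ v ∈ F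

/-- A polytope is simple if every vertex belongs to precisely `dim P` facets. -/
def IsSimplePolytope {n : ℕ} (P : Set (Fin n → ℝ)) : Prop :=
  ∀ v, IsVertex P v → {F | IsFacet P F ∧ v ∈ F}.ncard = sdim P

/-- A polytope is simplicial if every facet contains precisely `dim P` vertices. -/
def IsSimplicialPolytope {n : ℕ} (P : Set (Fin n → ℝ)) : Prop :=
  ∀ F, IsFacet P F → {v | IsVertex P v ∧ v ∈ F}.ncard = sdim P

/-- Two vertices are complementary if no facet contains both. -/
def Complementary {n : ℕ} (P : Set (Fin n → ℝ)) (u v : Fin n → ℝ) : Prop :=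
  ∀ F, IsFacet P F → ¬ (u ∈ F ∧ v ∈ F)

/-- `J` is the join `F ∨ G`: the smallest face of `P` containing both `F` and `G`. -/
def IsJoin {n : ℕ} (P F G J : Set (Fin n → ℝ)) : Prop :=
  IsFace P J ∧ F ⊆ J ∧ G ⊆ J ∧ ∀ J', IsFace P J' → F ⊆ J' → G ⊆ J' → J ⊆ J'


open Module

variable {n : ℕ}


abbrev E (n : ℕ) := Fin n → ℝ

theorem hull_le {S : Set (E n)} (f : (E n) →ₗ[ℝ] ℝ) (c : ℝ) (h : ∀ s ∈ S, f s ≤ c) :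
    ∀ x ∈ convexHull ℝ S, f x ≤ c := by
  intro x hx
  exact convexHull_min h (convex_halfSpace_le (LinearMap.isLinear f) c) hx

theorem const_on_affineSpan {A : Set (E n)} (f : (E n) →ₗ[ℝ] ℝ) (c : ℝ)
    (h : ∀ x ∈ A, f x = c) {z : E n} (hz : z ∈ affineSpan ℝ A) : f z = c := by
  refine affineSpan_induction (p := fun y => f y = c) hz h ?_
  intro r u v w hu hv hw
  simp only [vsub_eq_sub, vadd_eq_add, map_add, map_smul, map_sub, hu, hv, hw,
    smul_eq_mul, sub_self, mul_zero, zero_add]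

theorem vectorSpan_le_ker {A : Set (E n)} (f : (E n) →ₗ[ℝ] ℝ) (c : ℝ)
    (h : ∀ x ∈ A, f x = c) : vectorSpan ℝ A ≤ LinearMap.ker f := by
  rw [vectorSpan, Submodule.span_le]
  rintro t ⟨x, hx, y, hy, rfl⟩
  simp [LinearMap.mem_ker, vsub_eq_sub, h x hx, h y hy]

theorem sdim_lt_of_proper {P F : Set (E n)} (f : (E n) →ₗ[ℝ] ℝ) (c : ℝ)
    (hFP : ∀ x ∈ F, f x = c) (hF : F ⊆ P)
    {x y : E n} (hx : x ∈ P) (hy : y ∈ P) (hxy : f x ≠ f y) :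
    sdim F < sdim P := by
  have h1 : vectorSpan ℝ F ≤ vectorSpan ℝ P ⊓ LinearMap.ker f :=
    le_inf (vectorSpan_mono ℝ hF) (vectorSpan_le_ker f c hFP)
  have h2 : vectorSpan ℝ P ⊓ LinearMap.ker f < vectorSpan ℝ P := by
    refine lt_of_le_of_ne inf_le_left ?_
    intro he
    have hxyv : x - y ∈ vectorSpan ℝ P := vsub_mem_vectorSpan ℝ hx hy
    rw [← he] at hxyv
    have h3 : f (x - y) = 0 := hxyv.2
    rw [map_sub] at h3
    exact hxy (by linarith)
  rw [sdim, sdim]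
  calc finrank ℝ ↥(vectorSpan ℝ F) ≤ finrank ℝ ↥(vectorSpan ℝ P ⊓ LinearMap.ker f) :=
        Submodule.finrank_mono h1
    _ < finrank ℝ ↥(vectorSpan ℝ P) := Submodule.finrank_lt_finrank_of_lt h2

theorem exists_dual_annihilator (W : Submodule ℝ (E n)) (a : E n) (ha : a ∉ W) :
    ∃ g : (E n) →ₗ[ℝ] ℝ, (∀ x ∈ W, g x = 0) ∧ g a ≠ 0 := by
  have h0 : W.mkQ a ≠ 0 := by
    simpa [Submodule.Quotient.mk_eq_zero] using ha
  have := (Module.forall_dual_apply_eq_zero_iff ℝ (W.mkQ a)).not.mpr h0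
  push_neg at this
  obtain ⟨φ, hφ⟩ := this
  refine ⟨φ.comp W.mkQ, fun x hx => ?_, hφ⟩
  simp [(Submodule.Quotient.mk_eq_zero W).mpr hx]


theorem finrank_sup_span_singleton_le (V : Submodule ℝ (E n)) (x : E n) :
    finrank ℝ ↥(V ⊔ Submodule.span ℝ {x}) ≤ finrank ℝ ↥V + 1 := by
  have h1 := Submodule.finrank_sup_add_finrank_inf_eq V (Submodule.span ℝ {x})
  have h2 : finrank ℝ ↥(Submodule.span ℝ ({x} : Set (E n))) ≤ 1 := by
    by_cases hx : x = 0
    · rw [hx, Submodule.span_zero_singleton]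
      simp
    · rw [finrank_span_singleton hx]
  omega

theorem grow (S : Finset (E n)) (P : Set (E n)) (hP : P = convexHull ℝ ↑S)
    (z : E n) (hz : z ∈ affineSpan ℝ P) :
    ∀ (k : ℕ) (f : (E n) →ₗ[ℝ] ℝ) (c : ℝ),
    (∀ x ∈ P, f x ≤ c) → ({x ∈ P | f x = c} : Set (E n)).Nonempty → c < f z →
    (S.filter (fun s => f s ≠ c)).card ≤ k →
    ∃ (g : (E n) →ₗ[ℝ] ℝ) (e : ℝ), (∀ x ∈ P, g x ≤ e) ∧
      IsFacet P {x ∈ P | g x = e} ∧ e < g z := by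
  have hSP : ∀ s ∈ S, s ∈ P := by
    intro s hs
    rw [hP]
    exact subset_convexHull ℝ _ (Finset.mem_coe.mpr hs)
  have hmain : ∀ (k : ℕ) (f : (E n) →ₗ[ℝ] ℝ) (c : ℝ),
      (∀ x ∈ P, f x ≤ c) → ({x ∈ P | f x = c} : Set (E n)).Nonempty → c < f z →
      (S.filter (fun s => f s ≠ c)).card ≤ k →
      ∃ (g : (E n) →ₗ[ℝ] ℝ) (e : ℝ), (∀ x ∈ P, g x ≤ e) ∧
        IsFacet P {x ∈ P | g x = e} ∧ e < g z := by
    intro k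
    induction k with
    | zero =>
      intro f c hle hne hviol hcard
      by_cases hdim : sdim ({x ∈ P | f x = c} : Set (E n)) + 1 = sdim P
      · exact ⟨f, c, hle, ⟨Or.inr (Or.inr ⟨f, c, hle, rfl⟩), hne, hdim⟩, hviol⟩
      · exfalso
        have hT : S.filter (fun s => f s ≠ c) = ∅ :=
          Finset.card_eq_zero.mp (Nat.le_zero.mp hcard)
        have hall : ∀ s ∈ S, f s = c := by
          intro s hs
          by_contra hne'
          have h : s ∈ S.filter (fun s => f s ≠ c) := Finset.mem_filter.mpr ⟨hs, hne'⟩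
          simp [hT] at h
        have hconst : ∀ x ∈ P, f x = c := by
          intro x hx
          have h1 := hull_le f c (fun s hs => le_of_eq (hall s (Finset.mem_coe.mp hs)))
            x (hP ▸ hx)
          have h2 := hull_le (-f) (-c)
            (fun s hs => by simp [hall s (Finset.mem_coe.mp hs)]) x (hP ▸ hx)
          simp only [LinearMap.neg_apply, neg_le_neg_iff] at h2
          linarith
        have := const_on_affineSpan f c hconst hz
        linarith
    | succ k ih =>
      intro f c hle hne hviol hcard
      by_cases hdim : sdim ({x ∈ P | f x = c} : Set (E n)) + 1 = sdim P
      · exact ⟨f, c, hle, ⟨Or.inr (Or.inr ⟨f, c, hle, rfl⟩), hne, hdim⟩, hviol⟩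
      obtain ⟨p, hpP, hpc⟩ := hne
      have hpF : p ∈ ({x ∈ P | f x = c} : Set (E n)) := ⟨hpP, hpc⟩
      have hT : (S.filter (fun s => f s ≠ c)).Nonempty := by
        rcases Finset.eq_empty_or_nonempty (S.filter (fun s => f s ≠ c)) with h | h
        · exfalso
          have hall : ∀ s ∈ S, f s = c := by
            intro s hs
            by_contra hne'
            have h' : s ∈ S.filter (fun s => f s ≠ c) := Finset.mem_filter.mpr ⟨hs, hne'⟩
            simp [h] at h'
          have hconst : ∀ x ∈ P, f x = c := by
            intro x hx
            have h1 := hull_le f c (fun s hs => le_of_eq (hall s (Finset.mem_coe.mp hs)))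
              x (hP ▸ hx)
            have h2 := hull_le (-f) (-c)
              (fun s hs => by simp [hall s (Finset.mem_coe.mp hs)]) x (hP ▸ hx)
            simp only [LinearMap.neg_apply, neg_le_neg_iff] at h2
            linarith
          have := const_on_affineSpan f c hconst hz
          linarith
        · exact h
      have hTlt : ∀ s ∈ S.filter (fun s => f s ≠ c), f s < c := by
        intro s hs
        have h1 := Finset.mem_filter.mp hs
        exact lt_of_le_of_ne (hle s (hSP s h1.1)) h1.2
      obtain ⟨s₁, hs₁T⟩ := hT
      have hlt : sdim ({x ∈ P | f x = c} : Set (E n)) < sdim P := by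
        refine sdim_lt_of_proper f c (fun x hx => hx.2) (fun x hx => hx.1)
          hpP (hSP s₁ (Finset.mem_filter.mp hs₁T).1) ?_
        rw [hpc]
        exact fun h => (Finset.mem_filter.mp hs₁T).2 h.symm
      have hdim2 : finrank ℝ ↥(vectorSpan ℝ ({x ∈ P | f x = c} : Set (E n))) + 2
          ≤ finrank ℝ ↥(vectorSpan ℝ P) := by
        have h0 : sdim ({x ∈ P | f x = c} : Set (E n)) + 1 ≠ sdim P := hdim
        rw [sdim, sdim] at hlt h0
        omega
      -- find rotation functional g
      have hex : ∃ g : (E n) →ₗ[ℝ] ℝ,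
          (∀ x ∈ vectorSpan ℝ ({x ∈ P | f x = c} : Set (E n)), g x = 0) ∧
          0 ≤ g (z - p) ∧ ∃ s ∈ S.filter (fun s => f s ≠ c), 0 < g (s - p) := by
        by_contra hnex
        push_neg at hnex
        have hTW : ∀ s ∈ S.filter (fun s => f s ≠ c), s - p ∈
            (vectorSpan ℝ ({x ∈ P | f x = c} : Set (E n)) ⊔ Submodule.span ℝ {z - p}) := by
          intro s hs
          by_contra hsW
          obtain ⟨g₀, hg₀W, hg₀s⟩ := exists_dual_annihilator _ (s - p) hsW
          have hkill : ∀ x ∈ vectorSpan ℝ ({x ∈ P | f x = c} : Set (E n)), g₀ x = 0 :=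
            fun x hx => hg₀W x (Submodule.mem_sup_left hx)
          have hzp : g₀ (z - p) = 0 :=
            hg₀W _ (Submodule.mem_sup_right (Submodule.mem_span_singleton_self _))
          rcases lt_trichotomy (g₀ (s - p)) 0 with hlt' | heq' | hgt'
          · have := hnex (-g₀) (fun x hx => by simp [hkill x hx]) (by simp [hzp]) s hs
            simp only [LinearMap.neg_apply] at this
            linarith
          · exact hg₀s heq'
          · have := hnex g₀ hkill (by simp [hzp]) s hs
            linarith
        have hSW : ∀ s ∈ S, s - p ∈
            (vectorSpan ℝ ({x ∈ P | f x = c} : Set (E n)) ⊔ Submodule.span ℝ {z - p}) := by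
          intro s hs
          by_cases hc : f s = c
          · exact Submodule.mem_sup_left
              (vsub_mem_vectorSpan ℝ (⟨hSP s hs, hc⟩ : s ∈ ({x ∈ P | f x = c} : Set (E n))) hpF)
          · exact hTW s (Finset.mem_filter.mpr ⟨hs, hc⟩)
        have hvsP : vectorSpan ℝ P ≤
            (vectorSpan ℝ ({x ∈ P | f x = c} : Set (E n)) ⊔ Submodule.span ℝ {z - p}) := by
          have he : vectorSpan ℝ P = vectorSpan ℝ (↑S : Set (E n)) := by
            rw [hP, ← direction_affineSpan, affineSpan_convexHull, direction_affineSpan]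
          rw [he, vectorSpan, Submodule.span_le]
          rintro v ⟨x, hx, y, hy, rfl⟩
          have hxy : x - y ∈
              (vectorSpan ℝ ({x ∈ P | f x = c} : Set (E n)) ⊔ Submodule.span ℝ {z - p}) := by
            have h1 : x - y = (x - p) - (y - p) := by abel
            rw [h1]
            exact Submodule.sub_mem _ (hSW x (Finset.mem_coe.mp hx)) (hSW y (Finset.mem_coe.mp hy))
          simpa [vsub_eq_sub] using hxy
        have hfinal : finrank ℝ ↥(vectorSpan ℝ P)
            ≤ finrank ℝ ↥(vectorSpan ℝ ({x ∈ P | f x = c} : Set (E n))) + 1 :=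
          le_trans (Submodule.finrank_mono hvsP)
            (finrank_sup_span_singleton_le _ _)
        omega
      obtain ⟨g, hgV, hgz, s₂, hs₂T, hs₂pos⟩ := hex
      -- the rotation amount
      have hTpne : (((S.filter (fun s => f s ≠ c)).filter (fun s => 0 < g (s - p)))).Nonempty :=
        ⟨s₂, Finset.mem_filter.mpr ⟨hs₂T, hs₂pos⟩⟩
      set Tp := ((S.filter (fun s => f s ≠ c)).filter (fun s => 0 < g (s - p))) with hTpdef
      set r : (E n) → ℝ := fun s => (c - f s) / g (s - p) with hrdef
      have himne : (Tp.image r).Nonempty := hTpne.image r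
      obtain ⟨s₀, hs₀Tp, hs₀eq⟩ := Finset.mem_image.mp ((Tp.image r).min'_mem himne)
      set t := (Tp.image r).min' himne with htdef
      have hrpos : ∀ s ∈ Tp, 0 < r s := by
        intro s hs
        have h1 := Finset.mem_filter.mp hs
        exact div_pos (by linarith [hTlt s h1.1]) h1.2
      have htpos : 0 < t := by
        rw [← hs₀eq]
        exact hrpos s₀ hs₀Tp
      have hrmul : ∀ s : E n, 0 < g (s - p) → r s * g (s - p) = c - f s := by
        intro s hgs
        show (c - f s) / g (s - p) * g (s - p) = c - f s
        exact div_mul_cancel₀ _ (ne_of_gt hgs)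
      have htle : ∀ s ∈ Tp, t * g (s - p) ≤ c - f s := by
        intro s hs
        have h1 : t ≤ r s :=
          Finset.min'_le _ _ (Finset.mem_image_of_mem r hs)
        have h2 := (Finset.mem_filter.mp hs).2
        calc t * g (s - p) ≤ r s * g (s - p) := mul_le_mul_of_nonneg_right h1 h2.le
          _ = c - f s := hrmul s h2
      have happ : ∀ x : E n, (f + t • g) x = f x + t * g x := by
        intro x
        simp [LinearMap.add_apply, LinearMap.smul_apply, smul_eq_mul]
      have hgsub : ∀ x : E n, g (x - p) = g x - g p := fun x => by rw [map_sub]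
      have hFeq : ∀ x ∈ ({x ∈ P | f x = c} : Set (E n)), (f + t • g) x = c + t * g p := by
        intro x hx
        have h1 : g (x - p) = 0 := hgV _ (vsub_mem_vectorSpan ℝ hx hpF)
        rw [hgsub] at h1
        rw [happ, hx.2]
        have : g x = g p := by linarith
        rw [this]
      have hSle : ∀ s ∈ (↑S : Set (E n)), (f + t • g) s ≤ c + t * g p := by
        intro s hs'
        have hs := Finset.mem_coe.mp hs'
        by_cases hc : f s = c
        · exact le_of_eq (hFeq s ⟨hSP s hs, hc⟩)
        · have hsT : s ∈ S.filter (fun s => f s ≠ c) := Finset.mem_filter.mpr ⟨hs, hc⟩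
          by_cases hgs : 0 < g (s - p)
          · have h3 := htle s (Finset.mem_filter.mpr ⟨hsT, hgs⟩)
            rw [hgsub] at h3
            rw [happ]
            nlinarith
          · push_neg at hgs
            rw [happ]
            have h3 : t * g (s - p) ≤ 0 := mul_nonpos_of_nonneg_of_nonpos htpos.le hgs
            rw [hgsub] at h3
            have h4 := hTlt s hsT
            nlinarith
      have hle' : ∀ x ∈ P, (f + t • g) x ≤ c + t * g p := by
        intro x hx
        exact hull_le (f + t • g) (c + t * g p) hSle x (hP ▸ hx)
      have hne' : ({x ∈ P | (f + t • g) x = c + t * g p} : Set (E n)).Nonempty :=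
        ⟨p, hpP, hFeq p hpF⟩
      have hviol' : c + t * g p < (f + t • g) z := by
        rw [happ]
        have h1 : g (z - p) = g z - g p := hgsub z
        nlinarith
      have hcard' : (S.filter (fun s => (f + t • g) s ≠ c + t * g p)).card ≤ k := by
        have hsub : S.filter (fun s => (f + t • g) s ≠ c + t * g p)
            ⊂ S.filter (fun s => f s ≠ c) := by
          constructor
          · intro s hs
            have h1 := Finset.mem_filter.mp hs
            refine Finset.mem_filter.mpr ⟨h1.1, fun hc => h1.2 (hFeq s ⟨hSP s h1.1, hc⟩)⟩
          · intro hsub'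
            have hs₀T := (Finset.mem_filter.mp hs₀Tp).1
            have hs₀new := hsub' hs₀T
            have h2 := (Finset.mem_filter.mp hs₀new).2
            apply h2
            have hgs₀ := (Finset.mem_filter.mp hs₀Tp).2
            have heq : t * g (s₀ - p) = c - f s₀ := by
              rw [← hs₀eq]
              exact hrmul s₀ hgs₀
            rw [happ]
            rw [hgsub] at heq
            linarith
        have hlt'' := Finset.card_lt_card hsub
        omega
      exact ih (f + t • g) (c + t * g p) hle' hne' hviol' hcard'
  exact hmain



-- hyperplane uniqueness for facets
theorem HU {P G : Set (E n)} (g g' : (E n) →ₗ[ℝ] ℝ) (e e' : ℝ)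
    (hg : ∀ x ∈ P, g x ≤ e) (hg' : ∀ x ∈ P, g' x ≤ e')
    (hG : G = {x ∈ P | g x = e}) (hG' : G = {x ∈ P | g' x = e'})
    (hGne : G.Nonempty) (hdimG : sdim G + 1 = sdim P)
    {y : E n} (hy : y ∈ affineSpan ℝ P) (hviol : e < g y) : e' < g' y := by
  obtain ⟨p₀, hp₀G⟩ := hGne
  have hp₀P : p₀ ∈ P := (hG ▸ hp₀G).1
  have hp₀g : g p₀ = e := (hG ▸ hp₀G).2
  have hp₀g' : g' p₀ = e' := (hG' ▸ hp₀G).2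
  have hGsubP : G ⊆ P := fun x hx => (hG ▸ hx).1
  -- there is a point of P outside G
  have hx₁ : ∃ x₁ ∈ P, x₁ ∉ G := by
    by_contra hno
    push_neg at hno
    have : G = P := Set.Subset.antisymm hGsubP hno
    rw [this] at hdimG
    omega
  obtain ⟨x₁, hx₁P, hx₁G⟩ := hx₁
  have hgx₁ : g x₁ < e := by
    refine lt_of_le_of_ne (hg x₁ hx₁P) (fun h => hx₁G ?_)
    rw [hG]; exact ⟨hx₁P, h⟩
  have hg'x₁ : g' x₁ < e' := by
    refine lt_of_le_of_ne (hg' x₁ hx₁P) (fun h => hx₁G ?_)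
    rw [hG']; exact ⟨hx₁P, h⟩
  -- kernels coincide on the direction space
  have hVG_le_U : vectorSpan ℝ G ≤ vectorSpan ℝ P := vectorSpan_mono ℝ hGsubP
  have hVG_ker : ∀ (h : (E n) →ₗ[ℝ] ℝ) (ee : ℝ), G = {x ∈ P | h x = ee} →
      vectorSpan ℝ G ≤ LinearMap.ker h := by
    intro h ee hGh
    rw [vectorSpan, Submodule.span_le]
    rintro v ⟨a, ha, b, hb, rfl⟩
    have h1 : h a = ee := (hGh ▸ ha).2
    have h2 : h b = ee := (hGh ▸ hb).2
    simp [LinearMap.mem_ker, vsub_eq_sub, h1, h2]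
  have hu₀U : x₁ - p₀ ∈ vectorSpan ℝ P := vsub_mem_vectorSpan ℝ hx₁P hp₀P
  have hβ : g (x₁ - p₀) < 0 := by
    rw [map_sub, hp₀g]; linarith
  have hKeq : vectorSpan ℝ G = vectorSpan ℝ P ⊓ LinearMap.ker g := by
    refine Submodule.eq_of_le_of_finrank_le
      (le_inf hVG_le_U (hVG_ker g e hG)) ?_
    have hKlt : vectorSpan ℝ P ⊓ LinearMap.ker g < vectorSpan ℝ P := by
      refine lt_of_le_of_ne inf_le_left (fun hEq => ?_)
      have h4 : x₁ - p₀ ∈ vectorSpan ℝ P ⊓ LinearMap.ker g := by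
        rw [hEq]; exact hu₀U
      have h2 : g (x₁ - p₀) = 0 := h4.2
      linarith
    have h3 := Submodule.finrank_lt_finrank_of_lt hKlt
    rw [sdim, sdim] at hdimG
    omega
  -- key: on vectorSpan P, ker g ≤ ker g'
  have hker : ∀ u ∈ vectorSpan ℝ P, g u = 0 → g' u = 0 := by
    intro u hu hgu
    have : u ∈ vectorSpan ℝ G := by
      rw [hKeq]; exact ⟨hu, hgu⟩
    exact hVG_ker g' e' hG' this
  -- proportionality
  have huyU : y - p₀ ∈ vectorSpan ℝ P := by
    have h1 : y -ᵥ p₀ ∈ (affineSpan ℝ P).direction :=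
      AffineSubspace.vsub_mem_direction hy (subset_affineSpan ℝ P hp₀P)
    rwa [direction_affineSpan, vsub_eq_sub] at h1
  set β := g (x₁ - p₀) with hβdef
  have hu' : g (y - p₀ - (g (y - p₀) / β) • (x₁ - p₀)) = 0 := by
    rw [map_sub, map_smul, smul_eq_mul, div_mul_cancel₀ _ (ne_of_lt hβ)]
    ring
  have hu'U : y - p₀ - (g (y - p₀) / β) • (x₁ - p₀) ∈ vectorSpan ℝ P :=
    Submodule.sub_mem _ huyU (Submodule.smul_mem _ _ hu₀U)
  have hg'u' : g' (y - p₀ - (g (y - p₀) / β) • (x₁ - p₀)) = 0 := hker _ hu'U hu'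
  rw [map_sub, map_smul, smul_eq_mul] at hg'u'
  have hgy : g (y - p₀) = g y - e := by rw [map_sub, hp₀g]
  have hgy' : g' (y - p₀) = g' y - e' := by rw [map_sub, hp₀g']
  have hg'x₁p : g' (x₁ - p₀) = g' x₁ - e' := by rw [map_sub, hp₀g']
  rw [hgy, hgy', hg'x₁p] at hg'u'
  have hnum : 0 < g y - e := by linarith
  have hfrac : (g y - e) / β < 0 := div_neg_of_pos_of_neg hnum hβ
  nlinarith [hg'u', hfrac, hg'x₁, mul_pos_of_neg_of_neg hfrac (show g' x₁ - e' < 0 by linarith)]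


theorem hrep {S : Finset (E n)} {P : Set (E n)} (hP : P = convexHull ℝ ↑S)
    {z : E n} (hz : z ∈ affineSpan ℝ P) (hzP : z ∉ P) :
    ∃ (g : (E n) →ₗ[ℝ] ℝ) (e : ℝ), (∀ x ∈ P, g x ≤ e) ∧
      IsFacet P {x ∈ P | g x = e} ∧ e < g z := by
  have hconv : Convex ℝ P := hP ▸ convex_convexHull ℝ _
  have hclosed : IsClosed P := hP ▸ S.finite_toSet.isClosed_convexHull (𝕜 := ℝ)
  obtain ⟨f, u', hfu, huz⟩ := geometric_hahn_banach_closed_point hconv hclosed hzP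
  have hSne : S.Nonempty := by
    rcases S.eq_empty_or_nonempty with h | h
    · exfalso
      rw [h] at hP
      simp only [Finset.coe_empty, convexHull_empty] at hP
      rw [hP, AffineSubspace.span_empty] at hz
      exact AffineSubspace.notMem_bot ℝ (E n) z hz
    · exact h
  obtain ⟨s₀, hs₀S, hs₀max⟩ := S.exists_max_image (fun s => f.toLinearMap s) hSne
  have hs₀P : s₀ ∈ P := by
    rw [hP]; exact subset_convexHull ℝ _ (Finset.mem_coe.mpr hs₀S)
  have hle : ∀ x ∈ P, f.toLinearMap x ≤ f.toLinearMap s₀ := by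
    intro x hx
    exact hull_le f.toLinearMap (f.toLinearMap s₀)
      (fun s hs => hs₀max s (Finset.mem_coe.mp hs)) x (hP ▸ hx)
  have hne : ({x ∈ P | f.toLinearMap x = f.toLinearMap s₀} : Set (E n)).Nonempty :=
    ⟨s₀, hs₀P, rfl⟩
  have hviol : f.toLinearMap s₀ < f.toLinearMap z := lt_trans (hfu s₀ hs₀P) huz
  exact grow S P hP z hz (S.filter _).card f.toLinearMap (f.toLinearMap s₀)
    hle hne hviol le_rfl

theorem vertex_mem_of_sdim_pos {P : Set (E n)} {x : E n} (hx : IsVertex P x)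
    (hd : sdim P ≠ 0) : x ∈ P ∧ ∃ (f : (E n) →ₗ[ℝ] ℝ) (c : ℝ),
      (∀ y ∈ P, f y ≤ c) ∧ ({x} : Set (E n)) = {y ∈ P | f y = c} := by
  rcases hx with h | h | h
  · exact absurd h (Set.singleton_ne_empty x)
  · exfalso
    apply hd
    rw [← h, sdim, vectorSpan_singleton]
    exact finrank_bot ℝ _
  · obtain ⟨f, c, hfc, hset⟩ := h
    have hxm : x ∈ ({y ∈ P | f y = c} : Set (E n)) := hset ▸ rfl
    exact ⟨hxm.1, f, c, hfc, hset⟩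

theorem stmt3 {n d : ℕ} (hd : 1 < d) (P : Set (Fin n → ℝ))
    (hP : IsPolytope P) (hdim : sdim P = d) (hsimple : IsSimplePolytope P)
    (hfacets : {F | IsFacet P F}.ncard = 2 * d)
    (u v w : Fin n → ℝ) (hu : IsVertex P u) (hv : IsVertex P v)
    (hw : IsVertex P w) (huv : u ≠ v) (huw : u ≠ w)
    (h1 : Complementary P u v) (h2 : Complementary P u w) :
    v = w := by
  classical
  by_contra hvw
  obtain ⟨S, hPS⟩ := hP
  have hdne : sdim P ≠ 0 := by rw [hdim]; omega
  obtain ⟨hvP, f, c, hfle, hfset⟩ := vertex_mem_of_sdim_pos hv hdne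
  obtain ⟨hwP, -⟩ := vertex_mem_of_sdim_pos hw hdne
  have hfv : f v = c := by
    have : v ∈ ({y ∈ P | f y = c} : Set (Fin n → ℝ)) := hfset ▸ rfl
    exact this.2
  have hfw : f w < c := by
    refine lt_of_le_of_ne (hfle w hwP) (fun h => hvw ?_)
    have : w ∈ ({y ∈ P | f y = c} : Set (Fin n → ℝ)) := ⟨hwP, h⟩
    rw [← hfset] at this
    exact (Set.mem_singleton_iff.mp this).symm
  -- facet counting
  have hFin : {F | IsFacet P F}.Finite := by
    by_contra hinf
    have h0 : {F | IsFacet P F}.ncard = 0 := Set.Infinite.ncard hinf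
    omega
  have hAsub : {F | IsFacet P F ∧ u ∈ F} ⊆ {F | IsFacet P F} := fun F hF => hF.1
  have hAcard : {F | IsFacet P F ∧ u ∈ F}.ncard = d := by rw [hsimple u hu, hdim]
  have hdiffcard : ({F | IsFacet P F} \ {F | IsFacet P F ∧ u ∈ F}).ncard = d := by
    rw [Set.ncard_diff hAsub (hFin.subset hAsub), hfacets, hAcard]
    omega
  have hBveq : {F | IsFacet P F ∧ v ∈ F} = {F | IsFacet P F} \ {F | IsFacet P F ∧ u ∈ F} := by
    refine Set.eq_of_subset_of_ncard_le ?_ ?_ (hFin.diff)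
    · rintro F ⟨hFf, hFv⟩
      exact ⟨hFf, fun hFu => h1 F hFf ⟨hFu.2, hFv⟩⟩
    · rw [hdiffcard, hsimple v hv, hdim]
  have hBweq : {F | IsFacet P F ∧ w ∈ F} = {F | IsFacet P F} \ {F | IsFacet P F ∧ u ∈ F} := by
    refine Set.eq_of_subset_of_ncard_le ?_ ?_ (hFin.diff)
    · rintro F ⟨hFf, hFw⟩
      exact ⟨hFf, fun hFu => h2 F hFf ⟨hFu.2, hFw⟩⟩
    · rw [hdiffcard, hsimple w hw, hdim]
  have hkey : ∀ F, IsFacet P F → v ∈ F → w ∈ F := by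
    intro F hFf hFv
    have : F ∈ {F | IsFacet P F ∧ w ∈ F} := by
      rw [hBweq, ← hBveq]
      exact ⟨hFf, hFv⟩
    exact this.2
  -- canonical exposing pairs for facets
  have hpairs : ∀ F, IsFacet P F → ∃ (g : (Fin n → ℝ) →ₗ[ℝ] ℝ) (e : ℝ),
      (∀ x ∈ P, g x ≤ e) ∧ F = {x ∈ P | g x = e} := by
    intro F hF
    rcases hF.1 with h | h | h
    · exact absurd h (Set.nonempty_iff_ne_empty.mp hF.2.1)
    · exfalso
      have := hF.2.2
      rw [h] at this
      omega
    · exact h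
  choose g₀ e₀ hb₀ hs₀ using hpairs
  -- choose t > 0 small enough
  have hFne : {F | IsFacet P F}.Nonempty := by
    apply Set.nonempty_of_ncard_ne_zero
    rw [hfacets]; omega
  have hFinsetne : hFin.toFinset.Nonempty := hFin.toFinset_nonempty.mpr hFne
  set ff : Set (Fin n → ℝ) → ℝ := fun F =>
    if hF : IsFacet P F ∧ v ∉ F then
      min 1 ((e₀ F hF.1 - g₀ F hF.1 v) / max 1 (g₀ F hF.1 v - g₀ F hF.1 w))
    else 1 with hffdef
  have hffpos : ∀ F, IsFacet P F → 0 < ff F := by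
    intro F hF
    by_cases hvF : v ∉ F
    · rw [hffdef]
      simp only []
      rw [dif_pos ⟨hF, hvF⟩]
      have hgv : g₀ F hF v < e₀ F hF := by
        refine lt_of_le_of_ne (hb₀ F hF v hvP) (fun h => hvF ?_)
        rw [hs₀ F hF]
        exact ⟨hvP, h⟩
      have hmaxpos : (0:ℝ) < max 1 (g₀ F hF v - g₀ F hF w) :=
        lt_of_lt_of_le one_pos (le_max_left _ _)
      exact lt_min one_pos (div_pos (by linarith) hmaxpos)
    · push_neg at hvF
      rw [hffdef]
      simp only []
      rw [dif_neg (fun hc : IsFacet P F ∧ v ∉ F => hc.2 hvF)]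
      exact one_pos
  set t : ℝ := (hFin.toFinset.image ff).min' (hFinsetne.image ff) with htdef
  have htpos : 0 < t := by
    obtain ⟨F, hF, hFeq⟩ := Finset.mem_image.mp ((hFin.toFinset.image ff).min'_mem
      (hFinsetne.image ff))
    rw [htdef, ← hFeq]
    exact hffpos F (hFin.mem_toFinset.mp hF)
  have htle : ∀ F, IsFacet P F → t ≤ ff F := by
    intro F hF
    exact Finset.min'_le _ _ (Finset.mem_image_of_mem ff (hFin.mem_toFinset.mpr hF))
  -- the point y just beyond v
  set y : Fin n → ℝ := t • (v - w) + v with hydef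
  have hyaff : y ∈ affineSpan ℝ P := by
    have h1 : t • (v -ᵥ w) +ᵥ v ∈ affineSpan ℝ P :=
      AffineSubspace.smul_vsub_vadd_mem _ t (subset_affineSpan ℝ P hvP)
        (subset_affineSpan ℝ P hwP) (subset_affineSpan ℝ P hvP)
    simpa [vsub_eq_sub, vadd_eq_add] using h1
  have hyapp : ∀ g : (Fin n → ℝ) →ₗ[ℝ] ℝ, g y = g v + t * (g v - g w) := by
    intro g
    rw [hydef]
    simp only [map_add, map_smul, map_sub, smul_eq_mul]
    ring
  have hyP : y ∈ P := by
    by_contra hyP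
    obtain ⟨g, e, hgle, hgfacet, hgviol⟩ := hrep hPS hyaff hyP
    by_cases hvG : v ∈ ({x ∈ P | g x = e} : Set (Fin n → ℝ))
    · have hwG : w ∈ ({x ∈ P | g x = e} : Set (Fin n → ℝ)) := hkey _ hgfacet hvG
      have : g y = e := by
        rw [hyapp g, hvG.2, hwG.2]
        ring
      linarith
    · -- transfer to the canonical pair
      have hviol₀ : e₀ _ hgfacet < g₀ _ hgfacet y :=
        HU g (g₀ _ hgfacet) e (e₀ _ hgfacet) hgle (hb₀ _ hgfacet) rfl
          (hs₀ _ hgfacet) hgfacet.2.1 hgfacet.2.2 hyaff hgviol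
      -- but t was chosen small enough
      have hvG₀ : g₀ _ hgfacet v < e₀ _ hgfacet := by
        refine lt_of_le_of_ne (hb₀ _ hgfacet v hvP) (fun h => hvG ?_)
        have : v ∈ ({x ∈ P | g₀ _ hgfacet x = e₀ _ hgfacet} : Set (Fin n → ℝ)) := ⟨hvP, h⟩
        rw [← hs₀ _ hgfacet] at this
        exact this
      have hvnG : v ∉ ({x ∈ P | g x = e} : Set (Fin n → ℝ)) := hvG
      have hffF : ff ({x ∈ P | g x = e}) =
          min 1 ((e₀ _ hgfacet - g₀ _ hgfacet v) / max 1 (g₀ _ hgfacet v - g₀ _ hgfacet w)) := by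
        rw [hffdef]
        simp only []
        rw [dif_pos ⟨hgfacet, hvnG⟩]
      have htle' := htle _ hgfacet
      rw [hffF] at htle'
      have hy₀ : g₀ _ hgfacet y = g₀ _ hgfacet v + t * (g₀ _ hgfacet v - g₀ _ hgfacet w) :=
        hyapp _
      set a := g₀ _ hgfacet v with hadef
      set b := g₀ _ hgfacet w with hbdef
      set ee := e₀ _ hgfacet with heedef
      have hM : (0:ℝ) < max 1 (a - b) := lt_of_lt_of_le one_pos (le_max_left _ _)
      have hab : a - b ≤ max 1 (a - b) := le_max_right _ _
      have htle'' : t ≤ (ee - a) / max 1 (a - b) := le_trans htle' (min_le_right _ _)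
      have hmul : t * (a - b) ≤ ee - a := by
        rcases le_or_gt (a - b) 0 with hab0 | hab0
        · have : t * (a - b) ≤ 0 := mul_nonpos_of_nonneg_of_nonpos htpos.le hab0
          linarith
        · have h5 : t * (a - b) ≤ (ee - a) / max 1 (a - b) * (a - b) :=
            mul_le_mul_of_nonneg_right htle'' hab0.le
          have h6 : (ee - a) / max 1 (a - b) * (a - b) ≤ ee - a := by
            rw [div_mul_eq_mul_div]
            rw [div_le_iff₀ hM]
            nlinarith
          linarith
      rw [hy₀] at hviol₀
      linarith
  -- final contradiction with the vertex functional of v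
  have : f y ≤ c := hfle y hyP
  rw [hyapp f, hfv] at this
  nlinarith
end

section
/- Let P be a simple polytope of dimension d > 1, and let u, v be vertices of P that lie on exactly one common facet F. Then there is precisely one vertex x of P adjacent to v with x ∉ F, and for this x the vertices u and x have at most one facet of P in common; moreover, no single facet of P contains all three vertices u, v, x. -/
open Set

attribute [local instance] Classical.propDecidable

namespace PolyAux

variable {n : ℕ}

theorem face_iff {P G : Set (Fin n → ℝ)} :
    IsFace P G ↔ ∃ (f : (Fin n → ℝ) →ₗ[ℝ] ℝ) (c : ℝ),
      (∀ x ∈ P, f x ≤ c) ∧ G = {x ∈ P | f x = c} := by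
  constructor
  · rintro (rfl | rfl | h)
    · exact ⟨0, 1, fun x _ => by norm_num, by ext x; simp⟩
    · exact ⟨0, 0, fun x _ => le_refl 0, by ext x; simp⟩
    · exact h
  · rintro h
    exact Or.inr (Or.inr h)

theorem face_subset {P G : Set (Fin n → ℝ)} (h : IsFace P G) : G ⊆ P := by
  rcases h with rfl | rfl | ⟨f, c, _, rfl⟩
  · exact empty_subset _
  · exact subset_rfl
  · exact fun x hx => hx.1

theorem le_on_hull {S : Set (Fin n → ℝ)} {f : (Fin n → ℝ) →ₗ[ℝ] ℝ} {c : ℝ}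
    (h : ∀ s ∈ S, f s ≤ c) : ∀ x ∈ convexHull ℝ S, f x ≤ c :=
  fun _ hx => convexHull_min h (convex_halfSpace_le (LinearMap.isLinear f) c) hx

theorem face_conv {S : Finset (Fin n → ℝ)} {f : (Fin n → ℝ) →ₗ[ℝ] ℝ} {c : ℝ}
    (hb : ∀ s ∈ S, f s ≤ c) :
    {x ∈ convexHull ℝ (S : Set (Fin n → ℝ)) | f x = c}
      = convexHull ℝ ((S.filter (fun s => f s = c) : Finset (Fin n → ℝ)) : Set (Fin n → ℝ)) := by
  apply Subset.antisymm
  · rintro x ⟨hxP, hxc⟩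
    rw [Finset.convexHull_eq] at hxP
    obtain ⟨w, hw0, hw1, hwx⟩ := hxP
    have hcm : S.centerMass w id = ∑ s ∈ S, w s • s := by
      rw [Finset.centerMass_eq_of_sum_1 _ _ hw1]; rfl
    have hfx : ∑ s ∈ S, w s * f s = c := by
      have := congrArg f hwx
      rw [hcm] at this
      rw [map_sum] at this
      simp only [map_smul, smul_eq_mul] at this
      rw [this, hxc]
    have hzero : ∀ s ∈ S, w s * (c - f s) = 0 := by
      rw [← Finset.sum_eq_zero_iff_of_nonneg
        (fun s hs => mul_nonneg (hw0 s hs) (sub_nonneg.2 (hb s hs)))]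
      have : ∑ s ∈ S, w s * (c - f s) = c * (∑ s ∈ S, w s) - ∑ s ∈ S, w s * f s := by
        rw [Finset.mul_sum, ← Finset.sum_sub_distrib]
        congr 1; ext s; ring
      rw [this, hw1, hfx]; ring
    have hwz : ∀ s ∈ S, s ∉ S.filter (fun s => f s = c) → w s = 0 := by
      intro s hs hns
      have : ¬ (f s = c) := fun h => hns (Finset.mem_filter.2 ⟨hs, h⟩)
      have h2 := hzero s hs
      rcases mul_eq_zero.1 h2 with h | h
      · exact h
      · exact absurd (by linarith [sub_eq_zero.1 h] : f s = c) this
    have hsum : ∑ s ∈ S.filter (fun s => f s = c), w s = 1 := by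
      rw [← hw1]
      exact Finset.sum_subset (Finset.filter_subset _ _) (fun s hs hns => hwz s hs hns)
    have hmass : (S.filter (fun s => f s = c)).centerMass w id = x := by
      rw [Finset.centerMass_subset id (Finset.filter_subset _ _) (fun s hs hns => hwz s hs hns)]
      exact hwx
    rw [← hmass]
    exact Finset.centerMass_mem_convexHull _
      (fun s hs => hw0 s (Finset.filter_subset _ _ hs)) (by rw [hsum]; norm_num)
      (fun s hs => Finset.mem_coe.2 hs)
  · intro x hx
    constructor
    · exact convexHull_mono (by exact_mod_cast Finset.filter_subset _ _) hx
    · have h1 : f x ≤ c := le_on_hull (fun s hs => by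
        rcases Finset.mem_filter.1 (Finset.mem_coe.1 hs) with ⟨_, h⟩; exact le_of_eq h) x hx
      have h2 : (-f) x ≤ -c := le_on_hull (f := -f) (c := -c) (fun s hs => by
        rcases Finset.mem_filter.1 (Finset.mem_coe.1 hs) with ⟨_, h⟩
        simp [h]) x hx
      simp only [LinearMap.neg_apply, neg_le_neg_iff] at h2
      linarith


theorem face_eq_conv_inter {P G : Set (Fin n → ℝ)} {S : Finset (Fin n → ℝ)}
    (hP : P = convexHull ℝ (S : Set (Fin n → ℝ))) (hG : IsFace P G) :
    G = convexHull ℝ ((S.filter (fun s => s ∈ G) : Finset (Fin n → ℝ)) : Set (Fin n → ℝ)) := by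
  obtain ⟨f, c, hb, hGe⟩ := face_iff.1 hG
  have hbS : ∀ s ∈ S, f s ≤ c := fun s hs => hb s (by rw [hP]; exact subset_convexHull ℝ _ hs)
  have key : G = convexHull ℝ ((S.filter (fun s => f s = c) : Finset (Fin n → ℝ)) : Set (Fin n → ℝ)) := by
    rw [hGe, hP]; exact face_conv hbS
  have hfe : S.filter (fun s => s ∈ G) = S.filter (fun s => f s = c) := by
    ext s
    simp only [Finset.mem_filter, and_congr_right_iff]
    intro hs
    have hsP : s ∈ P := by rw [hP]; exact subset_convexHull ℝ _ hs
    rw [hGe]; simp [hsP]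
  rw [hfe]; exact key

theorem face_convex {P G : Set (Fin n → ℝ)} (hP : IsPolytope P) (hG : IsFace P G) :
    Convex ℝ G := by
  obtain ⟨S, hPS⟩ := hP
  rw [face_eq_conv_inter hPS hG]
  exact convex_convexHull ℝ _

theorem face_polytope {P G : Set (Fin n → ℝ)} (hP : IsPolytope P) (hG : IsFace P G) :
    IsPolytope G := by
  obtain ⟨S, hPS⟩ := hP
  exact ⟨S.filter (fun s => s ∈ G), face_eq_conv_inter hPS hG⟩

theorem faces_finite {P : Set (Fin n → ℝ)} (hP : IsPolytope P) : {G | IsFace P G}.Finite := by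
  obtain ⟨S, hPS⟩ := hP
  apply Set.Finite.subset (Set.Finite.image (fun A : Finset (Fin n → ℝ) => convexHull ℝ (A : Set (Fin n → ℝ))) (S.powerset : Finset (Finset (Fin n → ℝ))).finite_toSet)
  intro G hG
  exact ⟨S.filter (fun s => s ∈ G), Finset.mem_coe.2 (Finset.mem_powerset.2 (Finset.filter_subset _ _)),
    (face_eq_conv_inter hPS hG).symm⟩

theorem face_inter {P G₁ G₂ : Set (Fin n → ℝ)} (h₁ : IsFace P G₁) (h₂ : IsFace P G₂) :
    IsFace P (G₁ ∩ G₂) := by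
  obtain ⟨f₁, c₁, hb₁, he₁⟩ := face_iff.1 h₁
  obtain ⟨f₂, c₂, hb₂, he₂⟩ := face_iff.1 h₂
  refine face_iff.2 ⟨f₁ + f₂, c₁ + c₂, fun x hx => ?_, ?_⟩
  · have := hb₁ x hx; have := hb₂ x hx
    simp only [LinearMap.add_apply]; linarith
  · ext x
    simp only [he₁, he₂, Set.mem_inter_iff, Set.mem_setOf_eq, LinearMap.add_apply]
    constructor
    · rintro ⟨⟨hx, e1⟩, ⟨_, e2⟩⟩; exact ⟨hx, by linarith⟩
    · rintro ⟨hx, e⟩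
      have := hb₁ x hx; have := hb₂ x hx
      exact ⟨⟨hx, by linarith⟩, ⟨hx, by linarith⟩⟩

theorem vertex_mem {P : Set (Fin n → ℝ)} {v : Fin n → ℝ} (h : IsVertex P v) : v ∈ P :=
  face_subset h rfl

theorem vertex_mem_S {P : Set (Fin n → ℝ)} {S : Finset (Fin n → ℝ)}
    (hP : P = convexHull ℝ (S : Set (Fin n → ℝ))) {v : Fin n → ℝ} (h : IsVertex P v) :
    v ∈ S := by
  have hrep := face_eq_conv_inter hP h
  have hne : ({v} : Set (Fin n → ℝ)).Nonempty := ⟨v, rfl⟩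
  rw [hrep, convexHull_nonempty_iff, Finset.filter_congr_decidable] at hne
  obtain ⟨s, hs⟩ := hne
  rcases Finset.mem_filter.1 (Finset.mem_coe.1 hs) with ⟨h1, h2⟩
  rw [Set.mem_singleton_iff] at h2
  subst h2; exact h1

theorem face_in_face {P G W : Set (Fin n → ℝ)} (hG : IsFace P G) (hW : IsFace P W)
    (hWG : W ⊆ G) : IsFace G W := by
  obtain ⟨f, c, hb, he⟩ := face_iff.1 hW
  refine face_iff.2 ⟨f, c, fun x hx => hb x (face_subset hG hx), ?_⟩
  ext x
  simp only [Set.mem_setOf_eq]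
  constructor
  · intro hx
    have := he ▸ hx
    exact ⟨hWG hx, (Set.mem_setOf_eq ▸ (he ▸ hx : x ∈ {x ∈ P | f x = c})).2⟩
  · rintro ⟨hxG, hfx⟩
    rw [he]; exact ⟨face_subset hG hxG, hfx⟩


theorem face_trans {P G W : Set (Fin n → ℝ)} (hP : IsPolytope P)
    (hG : IsFace P G) (hW : IsFace G W) : IsFace P W := by
  obtain ⟨S, hPS⟩ := hP
  obtain ⟨f, c, hfb, hGe⟩ := face_iff.1 hG
  obtain ⟨h, m, hhb, hWe⟩ := face_iff.1 hW
  have hGc : G = convexHull ℝ ((S.filter (fun s => s ∈ G) : Finset (Fin n → ℝ)) : Set (Fin n → ℝ)) :=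
    face_eq_conv_inter hPS hG
  by_cases hSG : ∀ s ∈ S, s ∈ G
  · have hPG : P = G := by
      apply Subset.antisymm _ (face_subset hG)
      rw [hPS, hGc]
      apply convexHull_mono
      intro s hs
      exact Finset.mem_coe.2 (Finset.mem_filter.2 ⟨Finset.mem_coe.1 hs, hSG s (Finset.mem_coe.1 hs)⟩)
    rw [hPG]; exact hW
  · push_neg at hSG
    have hUne : (S.filter (fun s => s ∉ G)).Nonempty := by
      obtain ⟨s, hs1, hs2⟩ := hSG; exact ⟨s, Finset.mem_filter.2 ⟨hs1, hs2⟩⟩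
    set U : Finset (Fin n → ℝ) := S.filter (fun s => s ∉ G) with hU
    have hUf : ∀ s ∈ U, f s < c := by
      intro s hs
      rcases Finset.mem_filter.1 hs with ⟨hsS, hsG⟩
      have hsP : s ∈ P := hPS ▸ subset_convexHull ℝ _ (Finset.mem_coe.2 hsS)
      rcases lt_or_eq_of_le (hfb s hsP) with hlt | heq
      · exact hlt
      · exact absurd (by rw [hGe]; exact ⟨hsP, heq⟩) hsG
    set ε : ℝ := U.inf' hUne (fun s => (c - f s) / (|h s - m| + 1)) with hε
    have hεpos : 0 < ε := by
      rw [hε, Finset.lt_inf'_iff]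
      intro s hs
      exact div_pos (sub_pos.2 (hUf s hs)) (by positivity)
    have hεle : ∀ s ∈ U, ε ≤ (c - f s) / (|h s - m| + 1) := fun s hs => Finset.inf'_le _ hs
    have hUstrict : ∀ s ∈ U, f s + ε * h s < c + ε * m := by
      intro s hs
      have h1 := hεle s hs
      have h2 := hUf s hs
      have habs : h s - m ≤ |h s - m| := le_abs_self _
      have hden : (0:ℝ) < |h s - m| + 1 := by positivity
      have k1 : ε * (h s - m) ≤ ε * |h s - m| := by nlinarith [hεpos.le]
      have k2 : ε * |h s - m| ≤ ((c - f s)/(|h s - m|+1)) * |h s - m| :=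
        mul_le_mul_of_nonneg_right h1 (abs_nonneg _)
      have k3 : ((c - f s)/(|h s - m|+1)) * |h s - m| < c - f s := by
        rw [div_mul_eq_mul_div, div_lt_iff₀ hden]
        nlinarith [abs_nonneg (h s - m)]
      nlinarith
    have hTfh : ∀ s ∈ S, s ∈ G → f s = c ∧ h s ≤ m := by
      intro s hsS hsG
      have hsP : s ∈ P := hPS ▸ subset_convexHull ℝ _ (Finset.mem_coe.2 hsS)
      constructor
      · have : s ∈ {x ∈ P | f x = c} := by rw [← hGe]; exact hsG
        exact this.2
      · exact hhb s hsG
    have hSbound : ∀ s ∈ S, f s + ε * h s ≤ c + ε * m := by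
      intro s hs
      by_cases hsG : s ∈ G
      · obtain ⟨h1, h2⟩ := hTfh s hs hsG
        nlinarith [hεpos.le]
      · exact (hUstrict s (Finset.mem_filter.2 ⟨hs, hsG⟩)).le
    refine face_iff.2 ⟨f + ε • h, c + ε * m, ?_, ?_⟩
    · intro x hx
      rw [hPS] at hx
      have := le_on_hull (f := f + ε • h) (c := c + ε*m) (fun s hs => by
        simpa using hSbound s (Finset.mem_coe.1 hs)) x hx
      simpa using this
    · have e1 : {x ∈ P | (f + ε • h) x = c + ε * m}
          = convexHull ℝ ((S.filter (fun s => (f + ε • h) s = c + ε*m) : Finset (Fin n → ℝ)) : Set (Fin n → ℝ)) := by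
        rw [hPS]
        exact face_conv (fun s hs => by simpa using hSbound s hs)
      have e2 : W = convexHull ℝ (((S.filter (fun s => s ∈ G)).filter (fun s => h s = m) : Finset (Fin n → ℝ)) : Set (Fin n → ℝ)) := by
        have h3 := face_conv (S := S.filter (fun s => s ∈ G)) (f := h) (c := m)
          (fun s hs => hhb s (Finset.mem_filter.1 hs).2)
        rw [← hGc] at h3
        rw [hWe]; exact h3
      rw [e2, e1]
      congr 1
      norm_cast
      ext s
      simp only [Finset.mem_filter, LinearMap.add_apply, LinearMap.smul_apply, smul_eq_mul]
      constructor
      · rintro ⟨⟨hsS, hsG⟩, hsh⟩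
        obtain ⟨h1, _⟩ := hTfh s hsS hsG
        exact ⟨hsS, by rw [h1, hsh]⟩
      · rintro ⟨hsS, hsfh⟩
        by_cases hsG : s ∈ G
        · obtain ⟨h1, _⟩ := hTfh s hsS hsG
          rw [h1] at hsfh
          have hhsm : h s = m := mul_left_cancel₀ (ne_of_gt hεpos) (by linarith)
          exact ⟨⟨hsS, hsG⟩, hhsm⟩
        · exact absurd hsfh (ne_of_lt (hUstrict s (Finset.mem_filter.2 ⟨hsS, hsG⟩)))

theorem sdim_mono {A B : Set (Fin n → ℝ)} (h : A ⊆ B) : sdim A ≤ sdim B :=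
  Submodule.finrank_mono (vectorSpan_mono ℝ h)

theorem sdim_empty : sdim (∅ : Set (Fin n → ℝ)) = 0 := by
  unfold sdim
  rw [vectorSpan_empty]
  exact finrank_bot ℝ _

theorem sdim_singleton (v : Fin n → ℝ) : sdim ({v} : Set (Fin n → ℝ)) = 0 := by
  unfold sdim
  rw [vectorSpan_singleton]
  exact finrank_bot ℝ _

theorem nonempty_of_sdim_pos {A : Set (Fin n → ℝ)} (h : 0 < sdim A) : A.Nonempty := by
  rcases A.eq_empty_or_nonempty with rfl | hne
  · rw [sdim_empty] at h; omega
  · exact hne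

theorem sdim_zero_subsingleton {A : Set (Fin n → ℝ)} (h : sdim A = 0) : A.Subsingleton := by
  intro a ha b hb
  have h0 : vectorSpan ℝ A = ⊥ := Submodule.finrank_eq_zero.1 h
  have hmem := vsub_mem_vectorSpan ℝ ha hb
  rw [h0, Submodule.mem_bot] at hmem
  rw [← sub_eq_zero]
  exact hmem

theorem sdim_lt {P G W : Set (Fin n → ℝ)} (hG : IsFace P G) (hW : IsFace P W)
    (hWG : W ⊆ G) (hne : W.Nonempty) (hne2 : W ≠ G) : sdim W < sdim G := by
  obtain ⟨f, c, hb, he⟩ := face_iff.1 (face_in_face hG hW hWG)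
  obtain ⟨w, hw⟩ := hne
  obtain ⟨y, hyG, hyW⟩ : ∃ y, y ∈ G ∧ y ∉ W := by
    by_contra hc; push_neg at hc
    exact hne2 (Subset.antisymm hWG (fun y hy => hc y hy))
  have hfy : f y < c := by
    rcases lt_or_eq_of_le (hb y hyG) with h | h
    · exact h
    · exact absurd (by rw [he]; exact ⟨hyG, h⟩) hyW
  have hfW : ∀ a ∈ W, f a = c := by
    intro a ha
    have : a ∈ {x ∈ G | f x = c} := he ▸ ha
    exact this.2
  have hker : vectorSpan ℝ W ≤ LinearMap.ker f := by
    rw [vectorSpan_def]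
    apply Submodule.span_le.2
    rintro d hd
    rw [Set.mem_vsub] at hd
    obtain ⟨a, ha, b, hb', rfl⟩ := hd
    rw [SetLike.mem_coe, LinearMap.mem_ker, vsub_eq_sub, map_sub, hfW a ha, hfW b hb', sub_self]
  have hlt : vectorSpan ℝ W < vectorSpan ℝ G := by
    apply lt_of_le_of_ne (vectorSpan_mono ℝ hWG)
    intro heq
    have hmem : y - w ∈ vectorSpan ℝ G := by
      have := vsub_mem_vectorSpan ℝ hyG (hWG hw)
      rwa [vsub_eq_sub] at this
    rw [← heq] at hmem
    have := hker hmem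
    rw [LinearMap.mem_ker, map_sub, hfW w hw] at this
    linarith
  exact Submodule.finrank_lt_finrank_of_lt hlt

theorem hull_vertices_aux : ∀ (N : ℕ) (S : Finset (Fin n → ℝ)) (P : Set (Fin n → ℝ)),
    S.card ≤ N → P = convexHull ℝ (S : Set (Fin n → ℝ)) →
    P ⊆ convexHull ℝ {z | IsVertex P z} := by
  intro N
  induction N with
  | zero =>
    intro S P hcard hP
    have : S = ∅ := Finset.card_eq_zero.1 (Nat.le_zero.1 hcard)
    rw [this] at hP
    simp only [Finset.coe_empty, convexHull_empty] at hP
    rw [hP]; exact empty_subset _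
  | succ N ih =>
    intro S P hcard hP
    by_cases hdeg : ∃ t ∈ S, t ∈ convexHull ℝ ((S.erase t : Finset (Fin n → ℝ)) : Set (Fin n → ℝ))
    · obtain ⟨t, htS, ht⟩ := hdeg
      have hPe : P = convexHull ℝ ((S.erase t : Finset (Fin n → ℝ)) : Set (Fin n → ℝ)) := by
        rw [hP]
        apply Subset.antisymm
        · apply convexHull_min _ (convex_convexHull ℝ _)
          intro s hs
          by_cases hst : s = t
          · subst hst; exact ht
          · exact subset_convexHull ℝ _ (Finset.mem_coe.2 (Finset.mem_erase.2 ⟨hst, Finset.mem_coe.1 hs⟩))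
        · exact convexHull_mono (fun s hs => Finset.mem_coe.2 (Finset.mem_erase.1 (Finset.mem_coe.1 hs)).2)
      exact ih (S.erase t) P (by have := Finset.card_erase_lt_of_mem htS; omega) hPe
    · push_neg at hdeg
      have hvert : ∀ t ∈ S, IsVertex P t := by
        intro t htS
        have hne : t ∉ convexHull ℝ ((S.erase t : Finset (Fin n → ℝ)) : Set (Fin n → ℝ)) := hdeg t htS
        obtain ⟨φ, u, hu1, hu2⟩ := geometric_hahn_banach_closed_point
          (convex_convexHull ℝ _)
          (((S.erase t).finite_toSet.isCompact_convexHull (𝕜 := ℝ)).isClosed) hne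
        have hbS : ∀ s ∈ S, (φ : (Fin n → ℝ) →ₗ[ℝ] ℝ) s ≤ φ t := by
          intro s hs
          by_cases hst : s = t
          · subst hst; rfl
          · have : φ s < u := hu1 s (subset_convexHull ℝ _ (Finset.mem_coe.2 (Finset.mem_erase.2 ⟨hst, hs⟩)))
            exact le_of_lt (lt_trans this hu2)
        refine face_iff.2 ⟨(φ : (Fin n → ℝ) →ₗ[ℝ] ℝ), φ t, ?_, ?_⟩
        · intro x hx
          rw [hP] at hx
          exact le_on_hull hbS x hx
        · have := face_conv (S := S) (f := (φ : (Fin n → ℝ) →ₗ[ℝ] ℝ)) (c := φ t) hbS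
          rw [hP]
          rw [this]
          have hfe : S.filter (fun s => (φ : (Fin n → ℝ) →ₗ[ℝ] ℝ) s = φ t) = {t} := by
            ext s
            simp only [Finset.mem_filter, Finset.mem_singleton]
            constructor
            · rintro ⟨hsS, hse⟩
              by_contra hst
              have : φ s < u := hu1 s (subset_convexHull ℝ _ (Finset.mem_coe.2 (Finset.mem_erase.2 ⟨hst, hsS⟩)))
              have : (φ : (Fin n → ℝ) →ₗ[ℝ] ℝ) s < φ t := lt_trans this hu2
              exact absurd hse (ne_of_lt this)
            · rintro rfl; exact ⟨htS, rfl⟩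
          rw [hfe]
          simp
      have hsubv : (S : Set (Fin n → ℝ)) ⊆ {z | IsVertex P z} :=
        fun t ht => hvert t (Finset.mem_coe.1 ht)
      calc P = convexHull ℝ (S : Set (Fin n → ℝ)) := hP
        _ ⊆ convexHull ℝ {z | IsVertex P z} := convexHull_mono hsubv

theorem poly_hull_vertices {P : Set (Fin n → ℝ)} (hP : IsPolytope P) :
    P = convexHull ℝ {z | IsVertex P z} := by
  obtain ⟨S, hPS⟩ := hP
  apply Subset.antisymm
  · exact hull_vertices_aux S.card S P le_rfl hPS
  · apply convexHull_min _ (by rw [hPS]; exact convex_convexHull ℝ _)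
    intro z hz
    exact vertex_mem hz

theorem exists_vertex {P : Set (Fin n → ℝ)} (hP : IsPolytope P) (hne : P.Nonempty) :
    ∃ z, IsVertex P z := by
  have hkm := poly_hull_vertices hP
  rcases hne with ⟨p, hp⟩
  rw [hkm] at hp
  by_contra hc; push_neg at hc
  have : {z | IsVertex P z} = ∅ := eq_empty_iff_forall_notMem.2 hc
  rw [this, convexHull_empty] at hp
  exact hp

theorem face_has_vertex {P G : Set (Fin n → ℝ)} (hP : IsPolytope P) (hG : IsFace P G)
    (hne : G.Nonempty) : ∃ z, IsVertex P z ∧ z ∈ G := by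
  obtain ⟨z, hz⟩ := exists_vertex (face_polytope hP hG) hne
  exact ⟨z, face_trans hP hG hz, vertex_mem hz⟩


theorem vertex_not_strict_combo {P : Set (Fin n → ℝ)} {z a b : Fin n → ℝ} {l : ℝ}
    (hz : IsVertex P z) (ha : a ∈ P) (hb : b ∈ P) (hl0 : 0 < l) (hl1 : l < 1)
    (hcombo : z = (1 - l) • a + l • b) : a = z := by
  obtain ⟨f, cf, hbd, he⟩ := face_iff.1 hz
  have hza : f z = cf := (he ▸ (rfl : z ∈ ({z} : Set (Fin n → ℝ))) : _ ∈ {x ∈ P | f x = cf}).2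
  have h1 : f a ≤ cf := hbd a ha
  have h2 : f b ≤ cf := hbd b hb
  have h3 : f z = (1 - l) * f a + l * f b := by
    rw [hcombo]
    simp [map_add, map_smul, smul_eq_mul]
  have hfa : f a = cf := by nlinarith
  have hmem : a ∈ {x ∈ P | f x = cf} := ⟨ha, hfa⟩
  rw [← he] at hmem
  exact hmem

theorem face_self (P : Set (Fin n → ℝ)) : IsFace P P := Or.inr (Or.inl rfl)

theorem face_sInter_aux {P : Set (Fin n → ℝ)} (A : Finset (Set (Fin n → ℝ))) :
    (∀ G ∈ A, IsFace P G) → IsFace P (P ∩ ⋂₀ (A : Set (Set (Fin n → ℝ)))) := by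
  induction A using Finset.induction_on with
  | empty =>
    intro _
    simp only [Finset.coe_empty, Set.sInter_empty, Set.inter_univ]
    exact face_self P
  | @insert G A' hGA' ih =>
    intro hf
    have h1 := ih (fun G' hG' => hf G' (Finset.mem_insert_of_mem hG'))
    have h2 : IsFace P G := hf G (Finset.mem_insert_self _ _)
    have he : P ∩ ⋂₀ ((insert G A' : Finset (Set (Fin n → ℝ))) : Set (Set (Fin n → ℝ)))
        = (P ∩ ⋂₀ (A' : Set (Set (Fin n → ℝ)))) ∩ G := by
      rw [Finset.coe_insert, Set.sInter_insert]
      ext x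
      simp only [Set.mem_inter_iff]
      tauto
    rw [he]
    exact face_inter h1 h2

theorem face_sInter {P : Set (Fin n → ℝ)} {A : Set (Set (Fin n → ℝ))} (hA : A.Finite)
    (hne : A.Nonempty) (hf : ∀ G ∈ A, IsFace P G) : IsFace P (⋂₀ A) := by
  have h := face_sInter_aux (P := P) hA.toFinset
    (fun G hG => hf G (hA.mem_toFinset.1 hG))
  rw [hA.coe_toFinset] at h
  obtain ⟨G₀, hG₀⟩ := hne
  have he : P ∩ ⋂₀ A = ⋂₀ A := by
    apply Set.inter_eq_right.2
    intro x hx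
    exact face_subset (hf G₀ hG₀) (hx G₀ hG₀)
  rwa [he] at h

theorem face_conv_set {P G : Set (Fin n → ℝ)} {S : Finset (Fin n → ℝ)}
    (hP : P = convexHull ℝ (S : Set (Fin n → ℝ))) (hG : IsFace P G) :
    G = convexHull ℝ ((S : Set (Fin n → ℝ)) ∩ G) := by
  have h1 := face_eq_conv_inter hP hG
  have h2 : ((S.filter (fun s => s ∈ G) : Finset (Fin n → ℝ)) : Set (Fin n → ℝ))
      = (S : Set (Fin n → ℝ)) ∩ G := by
    ext s
    simp only [Finset.coe_filter, Set.mem_setOf_eq, Set.mem_inter_iff, Finset.mem_coe]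
  rw [h2] at h1
  exact h1

theorem sdim_conv (s : Set (Fin n → ℝ)) : sdim (convexHull ℝ s) = sdim s := by
  unfold sdim
  rw [← direction_affineSpan, affineSpan_convexHull, direction_affineSpan]

theorem rank_span_hyperplane {A : Set (Fin n → ℝ)} {g : (Fin n → ℝ) →ₗ[ℝ] ℝ}
    (hA : A.Nonempty) (hg : ∀ a ∈ A, g a = -1) :
    Module.finrank ℝ ↥(Submodule.span ℝ A) = Module.finrank ℝ ↥(vectorSpan ℝ A) + 1 := by
  obtain ⟨a₀, ha₀⟩ := hA
  have hVle : vectorSpan ℝ A ≤ LinearMap.ker g := by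
    rw [vectorSpan_def]; apply Submodule.span_le.2
    rintro d hd; rw [Set.mem_vsub] at hd; obtain ⟨a, ha, b, hb, rfl⟩ := hd
    rw [SetLike.mem_coe, LinearMap.mem_ker, vsub_eq_sub, map_sub, hg a ha, hg b hb]; ring
  have hsup : Submodule.span ℝ A = vectorSpan ℝ A ⊔ Submodule.span ℝ {a₀} := by
    apply le_antisymm
    · apply Submodule.span_le.2
      intro a ha
      have heq : a = (a - a₀) + a₀ := by abel
      rw [heq]
      apply Submodule.add_mem
      · apply Submodule.mem_sup_left
        have := vsub_mem_vectorSpan ℝ ha ha₀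
        rwa [vsub_eq_sub] at this
      · exact Submodule.mem_sup_right (Submodule.mem_span_singleton_self a₀)
    · apply sup_le
      · rw [vectorSpan_def]; apply Submodule.span_le.2
        rintro d hd; rw [Set.mem_vsub] at hd; obtain ⟨a, ha, b, hb, rfl⟩ := hd
        rw [SetLike.mem_coe, vsub_eq_sub]
        exact Submodule.sub_mem _ (Submodule.subset_span ha) (Submodule.subset_span hb)
      · apply Submodule.span_le.2
        intro x hx
        rw [Set.mem_singleton_iff] at hx
        subst hx
        exact Submodule.subset_span ha₀
  have hinf : vectorSpan ℝ A ⊓ Submodule.span ℝ {a₀} = ⊥ := by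
    rw [eq_bot_iff]
    intro x hx
    rw [Submodule.mem_inf] at hx
    obtain ⟨hx1, hx2⟩ := hx
    rw [Submodule.mem_span_singleton] at hx2
    obtain ⟨r, rfl⟩ := hx2
    have hk := hVle hx1
    rw [LinearMap.mem_ker, map_smul, hg a₀ ha₀, smul_eq_mul] at hk
    have hr : r = 0 := by linarith
    rw [hr, zero_smul]
    exact Submodule.zero_mem ⊥
  have h2 := Submodule.finrank_sup_add_finrank_inf_eq (vectorSpan ℝ A) (Submodule.span ℝ {a₀})
  rw [hinf] at h2
  have ha0 : a₀ ≠ 0 := by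
    intro h
    have := hg a₀ ha₀
    rw [h, map_zero] at this
    norm_num at this
  rw [finrank_span_singleton ha0] at h2
  rw [hsup]
  simp only [finrank_bot, add_zero] at h2
  omega

end PolyAux

namespace VF

open PolyAux

variable {n : ℕ}

noncomputable def nm (g : (Fin n → ℝ) →ₗ[ℝ] ℝ) (c : ℝ) (v t : Fin n → ℝ) : Fin n → ℝ :=
  (c - g t)⁻¹ • (t - v)

noncomputable def vfig (S : Finset (Fin n → ℝ)) (g : (Fin n → ℝ) →ₗ[ℝ] ℝ) (c : ℝ)
    (v : Fin n → ℝ) : Set (Fin n → ℝ) :=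
  convexHull ℝ (nm g c v '' ((S : Set (Fin n → ℝ)) \ {v}))

noncomputable def phi (S : Finset (Fin n → ℝ)) (g : (Fin n → ℝ) →ₗ[ℝ] ℝ) (c : ℝ)
    (v : Fin n → ℝ) (G : Set (Fin n → ℝ)) : Set (Fin n → ℝ) :=
  convexHull ℝ (nm g c v '' ((((S : Set (Fin n → ℝ)) ∩ G)) \ {v}))

noncomputable def psi (S : Finset (Fin n → ℝ)) (g : (Fin n → ℝ) →ₗ[ℝ] ℝ) (c : ℝ)
    (v : Fin n → ℝ) (H : Set (Fin n → ℝ)) : Set (Fin n → ℝ) :=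
  convexHull ℝ ({v} ∪ {t | t ∈ ((S : Set (Fin n → ℝ)) \ {v}) ∧ nm g c v t ∈ H})

structure Ctx (P : Set (Fin n → ℝ)) (S : Finset (Fin n → ℝ))
    (g : (Fin n → ℝ) →ₗ[ℝ] ℝ) (c : ℝ) (v : Fin n → ℝ) : Prop where
  hP : P = convexHull ℝ (S : Set (Fin n → ℝ))
  hb : ∀ x ∈ P, g x ≤ c
  hv : ({v} : Set (Fin n → ℝ)) = {x ∈ P | g x = c}

variable {P : Set (Fin n → ℝ)} {S : Finset (Fin n → ℝ)}
  {g : (Fin n → ℝ) →ₗ[ℝ] ℝ} {c : ℝ} {v : Fin n → ℝ}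

theorem Ctx.vP (ctx : Ctx P S g c v) : v ∈ P := by
  have : v ∈ ({v} : Set (Fin n → ℝ)) := rfl
  rw [ctx.hv] at this
  exact this.1

theorem Ctx.gv (ctx : Ctx P S g c v) : g v = c := by
  have : v ∈ ({v} : Set (Fin n → ℝ)) := rfl
  rw [ctx.hv] at this
  exact this.2

theorem Ctx.vert (ctx : Ctx P S g c v) : IsVertex P v :=
  face_iff.2 ⟨g, c, ctx.hb, ctx.hv⟩

theorem Ctx.vS (ctx : Ctx P S g c v) : v ∈ S := vertex_mem_S ctx.hP ctx.vert

theorem Ctx.memP (ctx : Ctx P S g c v) {t : Fin n → ℝ} (ht : t ∈ (S : Set (Fin n → ℝ))) :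
    t ∈ P := ctx.hP ▸ subset_convexHull ℝ _ ht

theorem Ctx.strict (ctx : Ctx P S g c v) {t : Fin n → ℝ} (ht : t ∈ (S : Set (Fin n → ℝ)))
    (htv : t ≠ v) : g t < c := by
  rcases lt_or_eq_of_le (ctx.hb t (ctx.memP ht)) with h | h
  · exact h
  · exfalso
    apply htv
    have : t ∈ {x ∈ P | g x = c} := ⟨ctx.memP ht, h⟩
    rw [← ctx.hv] at this
    exact this

theorem Ctx.beta_pos (ctx : Ctx P S g c v) {t : Fin n → ℝ} (ht : t ∈ (S : Set (Fin n → ℝ)))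
    (htv : t ≠ v) : 0 < c - g t := sub_pos.2 (ctx.strict ht htv)

theorem Ctx.nm_sub (ctx : Ctx P S g c v) {t : Fin n → ℝ} (ht : t ∈ (S : Set (Fin n → ℝ)))
    (htv : t ≠ v) : t - v = (c - g t) • nm g c v t := by
  unfold nm
  rw [smul_smul, mul_inv_cancel₀ (ne_of_gt (ctx.beta_pos ht htv)), one_smul]

theorem Ctx.nm_g (ctx : Ctx P S g c v) {t : Fin n → ℝ} (ht : t ∈ (S : Set (Fin n → ℝ)))
    (htv : t ≠ v) : g (nm g c v t) = -1 := by
  unfold nm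
  have h2 : c - g t ≠ 0 := ne_of_gt (ctx.beta_pos ht htv)
  rw [map_smul, smul_eq_mul, map_sub, ctx.gv, inv_mul_eq_div, div_eq_iff h2]
  ring

theorem Ctx.nm_lin (ctx : Ctx P S g c v) (f : (Fin n → ℝ) →ₗ[ℝ] ℝ)
    {t : Fin n → ℝ} (ht : t ∈ (S : Set (Fin n → ℝ))) (htv : t ≠ v) :
    f (nm g c v t) = (c - g t)⁻¹ * (f t - f v) := by
  unfold nm
  rw [map_smul, smul_eq_mul, map_sub]

/-- the generating finset of the vertex figure -/
noncomputable def genF (S : Finset (Fin n → ℝ)) (g : (Fin n → ℝ) →ₗ[ℝ] ℝ) (c : ℝ)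
    (v : Fin n → ℝ) : Finset (Fin n → ℝ) :=
  (S.erase v).image (fun t => nm g c v t)

theorem genF_coe : ((genF S g c v : Finset (Fin n → ℝ)) : Set (Fin n → ℝ))
    = nm g c v '' ((S : Set (Fin n → ℝ)) \ {v}) := by
  unfold genF
  rw [Finset.coe_image, Finset.coe_erase]

theorem vfig_conv : vfig S g c v = convexHull ℝ ((genF S g c v : Finset (Fin n → ℝ)) : Set (Fin n → ℝ)) := by
  unfold vfig
  rw [genF_coe]

theorem vfig_polytope : IsPolytope (vfig S g c v) := ⟨genF S g c v, vfig_conv⟩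

theorem gen_sub_vfig {t : Fin n → ℝ} (ht : t ∈ (S : Set (Fin n → ℝ))) (htv : t ≠ v) :
    nm g c v t ∈ vfig S g c v :=
  subset_convexHull ℝ _ ⟨t, ⟨ht, htv⟩, rfl⟩

theorem phi_spec (ctx : Ctx P S g c v) {G : Set (Fin n → ℝ)} (hG : IsFace P G) (hvG : v ∈ G) :
    IsFace (vfig S g c v) (phi S g c v G) ∧
      (∀ t, t ∈ (S : Set (Fin n → ℝ)) → t ≠ v → (t ∈ G ↔ nm g c v t ∈ phi S g c v G)) := by
  obtain ⟨f, cf, hfb, hGe⟩ := face_iff.1 hG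
  have hfv : f v = cf := by
    have : v ∈ {x ∈ P | f x = cf} := hGe ▸ hvG
    exact this.2
  have hgen : ∀ t ∈ (S : Set (Fin n → ℝ)) \ {v}, f (nm g c v t) ≤ 0 := by
    rintro t ⟨htS, htv⟩
    rw [Set.mem_singleton_iff] at htv
    rw [ctx.nm_lin f htS htv, hfv]
    have h1 : f t ≤ cf := hfb t (ctx.memP htS)
    have h2 := ctx.beta_pos htS htv
    have := inv_pos.2 h2
    nlinarith
  have hgenval : ∀ t ∈ (S : Set (Fin n → ℝ)) \ {v}, (f (nm g c v t) = 0 ↔ t ∈ G) := by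
    rintro t ⟨htS, htv⟩
    rw [Set.mem_singleton_iff] at htv
    rw [ctx.nm_lin f htS htv, hfv]
    have h2 := ctx.beta_pos htS htv
    constructor
    · intro h
      have : f t - cf = 0 := by
        have hinv : (c - g t)⁻¹ ≠ 0 := inv_ne_zero (ne_of_gt h2)
        exact (mul_eq_zero.1 h).resolve_left hinv
      rw [hGe]
      exact ⟨ctx.memP htS, by linarith⟩
    · intro h
      have : f t = cf := (hGe ▸ h : t ∈ {x ∈ P | f x = cf}).2
      rw [this]
      ring
  have hbZ : ∀ y ∈ vfig S g c v, f y ≤ 0 := by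
    intro y hy
    unfold vfig at hy
    refine le_on_hull ?_ y hy
    rintro z ⟨t, ht, rfl⟩
    exact hgen t ht
  have hface : phi S g c v G = {y ∈ vfig S g c v | f y = 0} := by
    have hconv := face_conv (S := genF S g c v) (f := f) (c := 0)
      (fun s hs => by
        have : s ∈ nm g c v '' ((S : Set (Fin n → ℝ)) \ {v}) := by
          rw [← genF_coe]; exact Finset.mem_coe.2 hs
        obtain ⟨t, ht, rfl⟩ := this
        exact hgen t ht)
    rw [← vfig_conv] at hconv
    rw [hconv]
    unfold phi
    congr 1
    rw [Finset.coe_filter]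
    ext y
    constructor
    · rintro ⟨t, ⟨⟨htS, htG⟩, htv⟩, rfl⟩
      rw [Set.mem_singleton_iff] at htv
      constructor
      · rw [← Finset.mem_coe, genF_coe]
        exact ⟨t, ⟨htS, htv⟩, rfl⟩
      · exact (hgenval t ⟨htS, htv⟩).2 htG
    · rintro ⟨hy, hfy⟩
      rw [← Finset.mem_coe, genF_coe] at hy
      obtain ⟨t, ⟨htS, htv⟩, rfl⟩ := hy
      exact ⟨t, ⟨⟨htS, (hgenval t ⟨htS, htv⟩).1 hfy⟩, htv⟩, rfl⟩
  constructor
  · rw [hface]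
    exact face_iff.2 ⟨f, 0, hbZ, rfl⟩
  · intro t htS htv
    constructor
    · intro htG
      exact subset_convexHull ℝ _ ⟨t, ⟨⟨htS, htG⟩, htv⟩, rfl⟩
    · intro hmem
      rw [hface] at hmem
      exact (hgenval t ⟨htS, htv⟩).1 hmem.2


theorem psi_spec (ctx : Ctx P S g c v) {H : Set (Fin n → ℝ)} (hH : IsFace (vfig S g c v) H) :
    IsFace P (psi S g c v H) ∧ v ∈ psi S g c v H ∧
      (∀ t, t ∈ (S : Set (Fin n → ℝ)) → t ≠ v → (t ∈ psi S g c v H ↔ nm g c v t ∈ H)) := by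
  obtain ⟨h, m, hhb, hHe⟩ := face_iff.1 hH
  set q : (Fin n → ℝ) →ₗ[ℝ] ℝ := h + m • g with hq
  set cq : ℝ := h v + m * c with hcq
  have hqv : q v = cq := by
    simp only [hq, hcq, LinearMap.add_apply, LinearMap.smul_apply, smul_eq_mul, ctx.gv]
  have hkey : ∀ t ∈ (S : Set (Fin n → ℝ)), t ≠ v →
      q t - cq = (c - g t) * (h (nm g c v t) - m) := by
    intro t htS htv
    have hsub := ctx.nm_sub htS htv
    have hh : h t - h v = (c - g t) * h (nm g c v t) := by
      rw [← map_sub, hsub, map_smul, smul_eq_mul]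
    simp only [hq, hcq, LinearMap.add_apply, LinearMap.smul_apply, smul_eq_mul]
    nlinarith [hh]
  have hbS : ∀ t ∈ (S : Set (Fin n → ℝ)), q t ≤ cq := by
    intro t htS
    by_cases htv : t = v
    · subst htv; exact le_of_eq hqv
    · have h1 := hkey t htS htv
      have h2 := ctx.beta_pos htS htv
      have h3 : h (nm g c v t) ≤ m := hhb _ (gen_sub_vfig htS htv)
      nlinarith
  have hiff : ∀ t ∈ (S : Set (Fin n → ℝ)), t ≠ v → (q t = cq ↔ nm g c v t ∈ H) := by
    intro t htS htv
    have h1 := hkey t htS htv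
    have h2 := ctx.beta_pos htS htv
    have hmem : nm g c v t ∈ vfig S g c v := gen_sub_vfig htS htv
    constructor
    · intro he
      rw [hHe]
      refine ⟨hmem, ?_⟩
      have hz : (c - g t) * (h (nm g c v t) - m) = 0 := by linarith
      have := (mul_eq_zero.1 hz).resolve_left (ne_of_gt h2)
      linarith
    · intro hmH
      have : h (nm g c v t) = m := (hHe ▸ hmH : _ ∈ {x ∈ vfig S g c v | h x = m}).2
      nlinarith
  have hfq : {x ∈ P | q x = cq} = psi S g c v H := by
    have hconv := face_conv (S := S) (f := q) (c := cq) (fun s hs => hbS s (Finset.mem_coe.2 hs))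
    rw [← ctx.hP] at hconv
    rw [hconv]
    unfold psi
    congr 1
    rw [Finset.coe_filter]
    ext s
    simp only [Set.mem_setOf_eq, Set.mem_union, Set.mem_singleton_iff, Set.mem_diff,
      Finset.mem_coe]
    constructor
    · rintro ⟨hsS, hse⟩
      by_cases hsv : s = v
      · exact Or.inl hsv
      · exact Or.inr ⟨⟨hsS, hsv⟩, (hiff s (Finset.mem_coe.2 hsS) hsv).1 hse⟩
    · rintro (rfl | ⟨⟨hsS, hsv⟩, hmH⟩)
      · exact ⟨ctx.vS, hqv⟩
      · exact ⟨hsS, (hiff s (Finset.mem_coe.2 hsS) hsv).2 hmH⟩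
  have hface : IsFace P (psi S g c v H) := by
    rw [← hfq]
    refine face_iff.2 ⟨q, cq, fun x hx => ?_, rfl⟩
    rw [ctx.hP] at hx
    exact le_on_hull hbS x hx
  refine ⟨hface, ?_, ?_⟩
  · rw [← hfq]; exact ⟨ctx.vP, hqv⟩
  · intro t htS htv
    rw [← hfq]
    constructor
    · rintro ⟨_, he⟩; exact (hiff t htS htv).1 he
    · intro hmH; exact ⟨ctx.memP htS, (hiff t htS htv).2 hmH⟩

theorem psi_phi (ctx : Ctx P S g c v) {G : Set (Fin n → ℝ)} (hG : IsFace P G) (hvG : v ∈ G) :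
    psi S g c v (phi S g c v G) = G := by
  obtain ⟨hfaceZ, hmem⟩ := phi_spec ctx hG hvG
  unfold psi
  have hset : ({v} ∪ {t | t ∈ ((S : Set (Fin n → ℝ)) \ {v}) ∧ nm g c v t ∈ phi S g c v G})
      = (S : Set (Fin n → ℝ)) ∩ G := by
    ext t
    simp only [Set.mem_union, Set.mem_singleton_iff, Set.mem_setOf_eq, Set.mem_diff,
      Set.mem_inter_iff, Finset.mem_coe]
    constructor
    · rintro (rfl | ⟨⟨htS, htv⟩, hmH⟩)
      · exact ⟨ctx.vS, hvG⟩
      · exact ⟨htS, (hmem t (Finset.mem_coe.2 htS) htv).2 hmH⟩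
    · rintro ⟨htS, htG⟩
      by_cases htv : t = v
      · exact Or.inl htv
      · exact Or.inr ⟨⟨htS, htv⟩, (hmem t (Finset.mem_coe.2 htS) htv).1 htG⟩
  rw [hset]
  exact (face_conv_set ctx.hP hG).symm

theorem phi_psi (ctx : Ctx P S g c v) {H : Set (Fin n → ℝ)} (hH : IsFace (vfig S g c v) H) :
    phi S g c v (psi S g c v H) = H := by
  obtain ⟨hfaceP, hvpsi, hmem⟩ := psi_spec ctx hH
  unfold phi
  have hset : nm g c v '' (((S : Set (Fin n → ℝ)) ∩ psi S g c v H) \ {v})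
      = ((genF S g c v : Finset (Fin n → ℝ)) : Set (Fin n → ℝ)) ∩ H := by
    rw [genF_coe]
    ext y
    constructor
    · rintro ⟨t, ⟨⟨htS, htpsi⟩, htv⟩, rfl⟩
      rw [Set.mem_singleton_iff] at htv
      exact ⟨⟨t, ⟨htS, htv⟩, rfl⟩, (hmem t htS htv).1 htpsi⟩
    · rintro ⟨⟨t, ⟨htS, htv⟩, rfl⟩, hyH⟩
      rw [Set.mem_singleton_iff] at htv
      exact ⟨t, ⟨⟨htS, (hmem t htS htv).2 hyH⟩, htv⟩, rfl⟩
  rw [hset]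
  exact (face_conv_set vfig_conv hH).symm

theorem phi_mono {G₁ G₂ : Set (Fin n → ℝ)} (h : G₁ ⊆ G₂) :
    phi S g c v G₁ ⊆ phi S g c v G₂ :=
  convexHull_mono (Set.image_mono (Set.diff_subset_diff_left
    (Set.inter_subset_inter_right _ h)))

theorem psi_mono {H₁ H₂ : Set (Fin n → ℝ)} (h : H₁ ⊆ H₂) :
    psi S g c v H₁ ⊆ psi S g c v H₂ :=
  convexHull_mono (Set.union_subset_union_right _ (fun t ht => ⟨ht.1, h ht.2⟩))

theorem phi_singleton_v : phi S g c v {v} = ∅ := by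
  unfold phi
  have hs : (((S : Set (Fin n → ℝ)) ∩ {v})) \ {v} = ∅ := by
    ext t
    simp only [Set.mem_diff, Set.mem_inter_iff, Set.mem_singleton_iff, Set.mem_empty_iff_false,
      iff_false, not_and, and_imp]
    tauto
  rw [hs, Set.image_empty, convexHull_empty]

theorem phi_top (ctx : Ctx P S g c v) : phi S g c v P = vfig S g c v := by
  unfold phi vfig
  have hs : (S : Set (Fin n → ℝ)) ∩ P = (S : Set (Fin n → ℝ)) :=
    Set.inter_eq_left.2 (fun t ht => ctx.memP ht)
  rw [hs]

theorem phi_sdim (ctx : Ctx P S g c v) {G : Set (Fin n → ℝ)} (hG : IsFace P G) (hvG : v ∈ G)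
    (hne : G ≠ {v}) : (phi S g c v G).Nonempty ∧ sdim G = sdim (phi S g c v G) + 1 := by
  have hGc := face_conv_set ctx.hP hG
  have hex : ∃ t₀, t₀ ∈ (S : Set (Fin n → ℝ)) ∩ G ∧ t₀ ≠ v := by
    by_contra hc
    push_neg at hc
    have hsub : (S : Set (Fin n → ℝ)) ∩ G ⊆ {v} := fun t ht => hc t ht
    have hGv : G ⊆ {v} := by
      rw [hGc]
      exact convexHull_min hsub (convex_singleton v)
    exact hne (Subset.antisymm hGv (Set.singleton_subset_iff.2 hvG))
  obtain ⟨t₀, ht₀, ht₀v⟩ := hex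
  have hAne : (nm g c v '' (((S : Set (Fin n → ℝ)) ∩ G) \ {v})).Nonempty :=
    ⟨nm g c v t₀, ⟨t₀, ⟨ht₀, ht₀v⟩, rfl⟩⟩
  have hAg : ∀ a ∈ nm g c v '' (((S : Set (Fin n → ℝ)) ∩ G) \ {v}), g a = -1 := by
    rintro a ⟨t, ⟨⟨htS, _⟩, htv⟩, rfl⟩
    rw [Set.mem_singleton_iff] at htv
    exact ctx.nm_g htS htv
  constructor
  · obtain ⟨a, ha⟩ := hAne
    exact ⟨a, subset_convexHull ℝ _ ha⟩
  · have h1 : sdim G = Module.finrank ℝ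
        ↥(Submodule.span ℝ ((fun t => t - v) '' ((S : Set (Fin n → ℝ)) ∩ G))) := by
      have e1 : sdim G = sdim ((S : Set (Fin n → ℝ)) ∩ G) := by
        conv_lhs => rw [hGc]
        exact sdim_conv _
      rw [e1]
      unfold sdim
      have hvmem : v ∈ ((S : Set (Fin n → ℝ)) ∩ G) := ⟨Finset.mem_coe.2 ctx.vS, hvG⟩
      have hvs := vectorSpan_eq_span_vsub_set_right ℝ hvmem
      rw [hvs]
      rfl
    have h2 : Submodule.span ℝ ((fun t => t - v) '' ((S : Set (Fin n → ℝ)) ∩ G))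
        = Submodule.span ℝ (nm g c v '' (((S : Set (Fin n → ℝ)) ∩ G) \ {v})) := by
      apply le_antisymm
      · apply Submodule.span_le.2
        rintro d ⟨t, htSG, rfl⟩
        simp only [SetLike.mem_coe]
        show t - v ∈ _
        by_cases htv : t = v
        · subst htv
          simp only [sub_self]
          exact Submodule.zero_mem _
        · rw [ctx.nm_sub htSG.1 htv]
          exact Submodule.smul_mem _ _ (Submodule.subset_span ⟨t, ⟨htSG, htv⟩, rfl⟩)
      · apply Submodule.span_le.2
        rintro a ⟨t, ⟨htSG, htv⟩, rfl⟩
        rw [Set.mem_singleton_iff] at htv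
        rw [SetLike.mem_coe]
        show (c - g t)⁻¹ • (t - v) ∈ _
        exact Submodule.smul_mem _ _ (Submodule.subset_span ⟨t, htSG, rfl⟩)
    have h3 : sdim (phi S g c v G) = Module.finrank ℝ
        ↥(vectorSpan ℝ (nm g c v '' (((S : Set (Fin n → ℝ)) ∩ G) \ {v}))) := by
      unfold phi
      rw [sdim_conv]
      rfl
    rw [h1, h2, h3, rank_span_hyperplane hAne hAg]


theorem vfig_sdim (ctx : Ctx P S g c v) (hne : P ≠ {v}) :
    sdim P = sdim (vfig S g c v) + 1 := by
  have h := phi_sdim ctx (face_self P) ctx.vP hne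
  rw [phi_top ctx] at h
  exact h.2

theorem psi_singleton_edge (ctx : Ctx P S g c v) {y : Fin n → ℝ}
    (hy : IsVertex (vfig S g c v) y) :
    IsFace P (psi S g c v {y}) ∧ v ∈ psi S g c v {y} ∧ sdim (psi S g c v {y}) = 1
      ∧ psi S g c v {y} ≠ {v} := by
  obtain ⟨hface, hvmem, _⟩ := psi_spec ctx (hy : IsFace (vfig S g c v) {y})
  have hnev : psi S g c v {y} ≠ {v} := by
    intro hc
    have h2 := phi_psi ctx (hy : IsFace (vfig S g c v) {y})
    rw [hc, phi_singleton_v] at h2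
    exact (Set.singleton_ne_empty y) h2.symm
  have h3 := phi_sdim ctx hface hvmem hnev
  rw [phi_psi ctx (hy : IsFace (vfig S g c v) {y})] at h3
  refine ⟨hface, hvmem, ?_, hnev⟩
  rw [h3.2, sdim_singleton]

theorem endpoint (ctx : Ctx P S g c v) {y : Fin n → ℝ} (hy : IsVertex (vfig S g c v) y) :
    ∃ x, IsVertex P x ∧ x ≠ v ∧ x ∈ psi S g c v {y} ∧
      ∀ z, IsVertex P z → z ∈ psi S g c v {y} → z = v ∨ z = x := by
  obtain ⟨hfaceP, hvpsi, hmem⟩ := psi_spec ctx (hy : IsFace (vfig S g c v) {y})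
  obtain ⟨_, _, _, hnev⟩ := psi_singleton_edge ctx hy
  have hpoly : IsPolytope P := ⟨S, ctx.hP⟩
  -- the set of S-points of psi {y}
  have hSE : ∀ t, t ∈ (S : Set (Fin n → ℝ)) →
      (t ∈ psi S g c v {y} ↔ (t = v ∨ (t ≠ v ∧ nm g c v t = y))) := by
    intro t htS
    by_cases htv : t = v
    · subst htv; simp [hvpsi]
    · rw [hmem t htS htv]
      simp [htv]
  -- B is nonempty
  have hBne : ∃ t, t ∈ (S : Set (Fin n → ℝ)) ∧ t ≠ v ∧ nm g c v t = y := by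
    by_contra hc
    push_neg at hc
    apply hnev
    have h1 := face_conv_set ctx.hP hfaceP
    have h2 : (S : Set (Fin n → ℝ)) ∩ psi S g c v {y} = {v} := by
      ext t
      simp only [Set.mem_inter_iff, Set.mem_singleton_iff]
      constructor
      · rintro ⟨htS, htE⟩
        rcases (hSE t htS).1 htE with h | ⟨h1', h2'⟩
        · exact h
        · exact absurd h2' (hc t htS h1')
      · rintro rfl
        exact ⟨Finset.mem_coe.2 ctx.vS, hvpsi⟩
    rw [h1, h2, convexHull_singleton]
  set BF : Finset (Fin n → ℝ) := S.filter (fun t => t ≠ v ∧ nm g c v t = y) with hBF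
  have hBFne : BF.Nonempty := by
    obtain ⟨t, ht1, ht2, ht3⟩ := hBne
    exact ⟨t, Finset.mem_filter.2 ⟨Finset.mem_coe.1 ht1, ht2, ht3⟩⟩
  obtain ⟨x, hxBF, hxmin⟩ := BF.exists_min_image (fun t => g t) hBFne
  obtain ⟨hxS, hxv, hxnm⟩ := Finset.mem_filter.1 hxBF
  have hxE : x ∈ psi S g c v {y} := (hSE x (Finset.mem_coe.2 hxS)).2 (Or.inr ⟨hxv, hxnm⟩)
  -- t = v + (c - g t) • y for t ∈ B
  have hrep : ∀ t, t ∈ (S : Set (Fin n → ℝ)) → t ≠ v → nm g c v t = y →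
      t = v + (c - g t) • y := by
    intro t htS htv htnm
    have := ctx.nm_sub htS htv
    rw [htnm] at this
    rw [← this]
    abel
  -- {x} is a face of psi {y}
  have hxface : IsFace (psi S g c v {y}) {x} := by
    have hgbd : ∀ t ∈ (S.filter (fun s => s ∈ psi S g c v {y})),
        (-g) t ≤ (-g) x := by
      intro t htf
      obtain ⟨htS, htE⟩ := Finset.mem_filter.1 htf
      simp only [LinearMap.neg_apply, neg_le_neg_iff]
      rcases (hSE t (Finset.mem_coe.2 htS)).1 htE with rfl | ⟨h1', h2'⟩
      · rw [ctx.gv]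
        exact le_of_lt (ctx.strict (Finset.mem_coe.2 hxS) hxv)
      · exact hxmin t (Finset.mem_filter.2 ⟨htS, h1', h2'⟩)
    have hEc := face_eq_conv_inter ctx.hP hfaceP
    refine face_iff.2 ⟨-g, (-g) x, ?_, ?_⟩
    · intro p hp
      rw [hEc] at hp
      exact le_on_hull hgbd p hp
    · have hcv := face_conv (S := S.filter (fun s => s ∈ psi S g c v {y}))
        (f := -g) (c := (-g) x) hgbd
      rw [← hEc] at hcv
      rw [hcv]
      have hfx : ((S.filter (fun s => s ∈ psi S g c v {y})).filter
          (fun s => (-g) s = (-g) x)) = {x} := by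
        ext t
        simp only [Finset.mem_filter, Finset.mem_singleton, LinearMap.neg_apply, neg_inj]
        constructor
        · rintro ⟨⟨htS, htE⟩, htg⟩
          rcases (hSE t (Finset.mem_coe.2 htS)).1 htE with rfl | ⟨h1', h2'⟩
          · exfalso
            have h3' := ctx.strict (Finset.mem_coe.2 hxS) hxv
            rw [← htg, ctx.gv] at h3'
            exact lt_irrefl _ h3'
          · rw [hrep t (Finset.mem_coe.2 htS) h1' h2', hrep x (Finset.mem_coe.2 hxS) hxv hxnm, htg]
        · rintro rfl
          exact ⟨⟨hxS, hxE⟩, rfl⟩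
      rw [hfx]
      simp
  have hxvert : IsVertex P x := face_trans hpoly hfaceP hxface
  refine ⟨x, hxvert, hxv, hxE, ?_⟩
  intro z hz hzE
  have hzS : z ∈ S := vertex_mem_S ctx.hP hz
  rcases (hSE z (Finset.mem_coe.2 hzS)).1 hzE with h | ⟨hzv, hznm⟩
  · exact Or.inl h
  · right
    by_contra hzx
    -- g x < g z : from minimality and z ≠ x
    have hzBF : z ∈ BF := Finset.mem_filter.2 ⟨hzS, hzv, hznm⟩
    have hgle : g x ≤ g z := hxmin z hzBF
    have hgne : g x ≠ g z := by
      intro he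
      apply hzx
      rw [hrep z (Finset.mem_coe.2 hzS) hzv hznm, hrep x (Finset.mem_coe.2 hxS) hxv hxnm, he]
    have hglt : g x < g z := lt_of_le_of_ne hgle hgne
    -- z is a strict combination of v and x
    have hbx : (0:ℝ) < c - g x := ctx.beta_pos (Finset.mem_coe.2 hxS) hxv
    have hbz : (0:ℝ) < c - g z := ctx.beta_pos (Finset.mem_coe.2 hzS) hzv
    set l : ℝ := (c - g z) / (c - g x) with hl
    have hl0 : 0 < l := div_pos hbz hbx
    have hl1 : l < 1 := by
      rw [hl, div_lt_one hbx]
      linarith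
    have hcombo : z = (1 - l) • v + l • x := by
      have hxr := hrep x (Finset.mem_coe.2 hxS) hxv hxnm
      have hzr := hrep z (Finset.mem_coe.2 hzS) hzv hznm
      rw [hzr, hxr]
      have : l * (c - g x) = c - g z := by
        rw [hl]; field_simp
      rw [smul_add, smul_smul, this]
      module
    have := vertex_not_strict_combo hz (ctx.vP) (vertex_mem hxvert) hl0 hl1 hcombo
    exact hzv this.symm

theorem facet_corr (ctx : Ctx P S g c v) (hd : 2 ≤ sdim P) :
    {H | IsFacet (vfig S g c v) H} = phi S g c v '' {K | IsFacet P K ∧ v ∈ K} ∧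
    Set.InjOn (phi S g c v) {K | IsFacet P K ∧ v ∈ K} := by
  have hnev : P ≠ {v} := by
    intro hc
    rw [hc, sdim_singleton] at hd
    omega
  have hsd := vfig_sdim ctx hnev
  constructor
  · ext H
    simp only [Set.mem_setOf_eq, Set.mem_image]
    constructor
    · intro hH
      refine ⟨psi S g c v H, ⟨?_, ?_⟩, phi_psi ctx hH.1⟩
      · obtain ⟨hface, hvmem, _⟩ := psi_spec ctx hH.1
        have hne2 : psi S g c v H ≠ {v} := by
          intro hc
          have h2 := phi_psi ctx hH.1
          rw [hc, phi_singleton_v] at h2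
          obtain ⟨yy, hyy⟩ := hH.2.1
          rw [← h2] at hyy
          exact hyy
        have h3 := phi_sdim ctx hface hvmem hne2
        rw [phi_psi ctx hH.1] at h3
        refine ⟨hface, ⟨v, hvmem⟩, ?_⟩
        have := hH.2.2
        omega
      · exact (psi_spec ctx hH.1).2.1
    · rintro ⟨K, ⟨hK, hvK⟩, rfl⟩
      have hKnev : K ≠ {v} := by
        intro hc
        have := hK.2.2
        rw [hc, sdim_singleton] at this
        omega
      have h3 := phi_sdim ctx hK.1 hvK hKnev
      refine ⟨(phi_spec ctx hK.1 hvK).1, h3.1, ?_⟩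
      have := hK.2.2
      omega
  · intro K₁ hK₁ K₂ hK₂ he
    have h1 := psi_phi ctx hK₁.1.1 hK₁.2
    have h2 := psi_phi ctx hK₂.1.1 hK₂.2
    rw [← h1, ← h2, he]

end VF

namespace PolyAux

variable {n : ℕ}

theorem segment_struct {Q : Set (Fin n → ℝ)} (hQ : IsPolytope Q) (h1 : sdim Q = 1) :
    ∃ a b : Fin n → ℝ, a ≠ b ∧ IsVertex Q a ∧ IsVertex Q b ∧
      IsFacet Q {a} ∧ IsFacet Q {b} ∧
      (∀ w, IsVertex Q w → w = a ∨ w = b) ∧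
      (∀ K, IsFacet Q K → K = {a} ∨ K = {b}) := by
  obtain ⟨S, hQS⟩ := hQ
  have hQne : Q.Nonempty := nonempty_of_sdim_pos (by omega)
  have hSne : S.Nonempty := by
    rcases S.eq_empty_or_nonempty with rfl | h
    · rw [hQS] at hQne; simp at hQne
    · exact h
  obtain ⟨s₀, hs₀⟩ := hSne
  have hs₀Q : s₀ ∈ Q := hQS ▸ subset_convexHull ℝ _ (Finset.mem_coe.2 hs₀)
  have hexd : ∃ s₁ ∈ S, s₁ ≠ s₀ := by
    by_contra hc
    push_neg at hc
    have hsub : (S : Set (Fin n → ℝ)) ⊆ {s₀} := fun t ht => hc t (Finset.mem_coe.1 ht)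
    have hQsub : Q ⊆ {s₀} := hQS ▸ convexHull_min hsub (convex_singleton _)
    have := sdim_mono hQsub
    rw [sdim_singleton] at this
    omega
  obtain ⟨s₁, hs₁S, hs₁ne⟩ := hexd
  have hs₁Q : s₁ ∈ Q := hQS ▸ subset_convexHull ℝ _ (Finset.mem_coe.2 hs₁S)
  set e : Fin n → ℝ := s₁ - s₀ with he
  have he0 : e ≠ 0 := sub_ne_zero.2 hs₁ne
  have heV : e ∈ vectorSpan ℝ Q := by
    have := vsub_mem_vectorSpan ℝ hs₁Q hs₀Q
    rwa [vsub_eq_sub] at this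
  have hspan : vectorSpan ℝ Q = Submodule.span ℝ {e} := by
    refine (Submodule.eq_of_le_of_finrank_le ?_ ?_).symm
    · rw [Submodule.span_le]
      intro x hx
      rw [Set.mem_singleton_iff] at hx
      subst hx
      exact heV
    · rw [finrank_span_singleton he0]
      unfold sdim at h1
      omega
  obtain ⟨i, hi⟩ : ∃ i, e i ≠ 0 := by
    by_contra hc; push_neg at hc; exact he0 (funext hc)
  set φ : (Fin n → ℝ) →ₗ[ℝ] ℝ := (e i)⁻¹ • LinearMap.proj i with hφ
  have hφe : φ e = 1 := by
    rw [hφ]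
    simp only [LinearMap.smul_apply, LinearMap.proj_apply, smul_eq_mul]
    exact inv_mul_cancel₀ hi
  have hdiff : ∀ p ∈ Q, ∀ q ∈ Q, p - q = (φ p - φ q) • e := by
    intro p hp q hq
    have hm : p - q ∈ vectorSpan ℝ Q := by
      have := vsub_mem_vectorSpan ℝ hp hq; rwa [vsub_eq_sub] at this
    rw [hspan, Submodule.mem_span_singleton] at hm
    obtain ⟨r, hr⟩ := hm
    have hφr : φ p - φ q = r := by
      rw [← map_sub, ← hr, map_smul, smul_eq_mul, hφe]; ring
    rw [hφr, hr]
  have hinj : ∀ p ∈ Q, ∀ q ∈ Q, φ p = φ q → p = q := by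
    intro p hp q hq hpq
    have := hdiff p hp q hq
    rw [hpq, sub_self, zero_smul, sub_eq_zero] at this
    exact this
  have memQ : ∀ s ∈ S, s ∈ Q := fun s hs => hQS ▸ subset_convexHull ℝ _ (Finset.mem_coe.2 hs)
  have mk : ∀ (ψ : (Fin n → ℝ) →ₗ[ℝ] ℝ) (z : Fin n → ℝ), z ∈ S → (∀ s ∈ S, ψ s ≤ ψ z) →
      (∀ s ∈ S, ψ s = ψ z → s = z) → IsVertex Q z := by
    intro ψ z hzS hbd hext
    refine face_iff.2 ⟨ψ, ψ z, ?_, ?_⟩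
    · intro p hp
      rw [hQS] at hp
      exact le_on_hull (fun s hs => hbd s (Finset.mem_coe.1 hs)) p hp
    · have hcv := face_conv (S := S) (f := ψ) (c := ψ z) hbd
      rw [← hQS] at hcv
      rw [hcv]
      have hfz : S.filter (fun s => ψ s = ψ z) = {z} := by
        ext t
        simp only [Finset.mem_filter, Finset.mem_singleton]
        constructor
        · rintro ⟨htS, hte⟩; exact hext t htS hte
        · rintro rfl; exact ⟨hzS, rfl⟩
      rw [hfz]
      simp
  obtain ⟨b, hbS, hbmax⟩ := S.exists_max_image (fun t => φ t) ⟨s₀, hs₀⟩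
  obtain ⟨a, haS, hamin⟩ := S.exists_min_image (fun t => φ t) ⟨s₀, hs₀⟩
  have hbvert : IsVertex Q b := mk φ b hbS (fun s hs => hbmax s hs)
    (fun s hs hse => hinj s (memQ s hs) b (memQ b hbS) hse)
  have havert : IsVertex Q a := mk (-φ) a haS
    (fun s hs => by simpa using hamin s hs)
    (fun s hs hse => hinj s (memQ s hs) a (memQ a haS) (by simpa using hse))
  have hab : a ≠ b := by
    intro hc
    subst hc
    have hconst : ∀ s ∈ S, s = a := by
      intro s hs
      exact hinj s (memQ s hs) a (memQ a haS) (le_antisymm (hbmax s hs) (hamin s hs))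
    have hsub : (S : Set (Fin n → ℝ)) ⊆ {a} := fun t ht => hconst t (Finset.mem_coe.1 ht)
    have hQsub : Q ⊆ {a} := hQS ▸ convexHull_min hsub (convex_singleton _)
    have := sdim_mono hQsub
    rw [sdim_singleton] at this
    omega
  have hvertclass : ∀ w, IsVertex Q w → w = a ∨ w = b := by
    intro w hw
    have hwS : w ∈ S := vertex_mem_S hQS hw
    have hwQ : w ∈ Q := memQ w hwS
    by_cases hwa : φ w = φ a
    · exact Or.inl (hinj w hwQ a (memQ a haS) hwa)
    by_cases hwb : φ w = φ b
    · exact Or.inr (hinj w hwQ b (memQ b hbS) hwb)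
    exfalso
    have hlt1 : φ a < φ w := lt_of_le_of_ne (hamin w hwS) (fun h => hwa h.symm)
    have hlt2 : φ w < φ b := lt_of_le_of_ne (hbmax w hwS) hwb
    have hR : (0:ℝ) < φ b - φ a := by linarith
    set l : ℝ := (φ w - φ a) / (φ b - φ a) with hl
    have hl0 : 0 < l := div_pos (by linarith) hR
    have hl1 : l < 1 := by
      rw [hl, div_lt_one hR]; linarith
    have hcombo : w = (1 - l) • a + l • b := by
      have h1' : w - a = (φ w - φ a) • e := hdiff w hwQ a (memQ a haS)
      have h2' : b - a = (φ b - φ a) • e := hdiff b (memQ b hbS) a (memQ a haS)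
      have h3' : w - a = l • (b - a) := by
        rw [h1', h2', smul_smul, hl]
        congr 1
        field_simp
      have : w = a + l • (b - a) := by rw [← h3']; abel
      rw [this]
      module
    have := vertex_not_strict_combo hw (memQ a haS) (memQ b hbS) hl0 hl1 hcombo
    rw [this] at hlt1
    exact lt_irrefl _ hlt1
  have hafacet : IsFacet Q {a} := ⟨havert, ⟨a, rfl⟩, by rw [sdim_singleton]; omega⟩
  have hbfacet : IsFacet Q {b} := ⟨hbvert, ⟨b, rfl⟩, by rw [sdim_singleton]; omega⟩
  refine ⟨a, b, hab, havert, hbvert, hafacet, hbfacet, hvertclass, ?_⟩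
  intro K hK
  obtain ⟨z, hz⟩ := hK.2.1
  have hsub : K.Subsingleton := sdim_zero_subsingleton (by have := hK.2.2; omega)
  have hKz : K = {z} := by
    apply Subset.antisymm
    · intro k hk; exact hsub hk hz
    · rintro k rfl; exact hz
  have hzvert : IsVertex Q z := show IsFace Q {z} from hKz ▸ hK.1
  rcases hvertclass z hzvert with rfl | rfl
  · exact Or.inl hKz
  · exact Or.inr hKz

end PolyAux

namespace PolyAux

variable {n : ℕ}

theorem facets_finite {P : Set (Fin n → ℝ)} (hP : IsPolytope P) :
    {K | IsFacet P K}.Finite :=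
  Set.Finite.subset (faces_finite hP) (fun _ hK => hK.1)

theorem facets_at_finite {P : Set (Fin n → ℝ)} (hP : IsPolytope P) (w : Fin n → ℝ) :
    {K | IsFacet P K ∧ w ∈ K}.Finite :=
  Set.Finite.subset (faces_finite hP) (fun _ hK => hK.1.1)

theorem main_ind (D : ℕ) : ∀ P : Set (Fin n → ℝ), IsPolytope P → sdim P = D →
    ((∀ w, IsVertex P w → D ≤ {K | IsFacet P K ∧ w ∈ K}.ncard) ∧
     (∀ w, IsVertex P w → ∀ p ∈ P, (∀ K, IsFacet P K → w ∈ K → p ∈ K) → p = w) ∧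
     (1 ≤ D → ∀ w, IsVertex P w → ∃ K, IsFacet P K ∧ w ∉ K)) := by
  induction D using Nat.strong_induction_on with
  | _ D IH =>
  intro P hP hdim
  by_cases hD0 : D = 0
  · subst hD0
    refine ⟨fun w _ => Nat.zero_le _, ?_, fun h1 => absurd h1 (by omega)⟩
    intro w hw p hp _
    exact sdim_zero_subsingleton hdim hp (vertex_mem hw)
  by_cases hD1 : D = 1
  · subst hD1
    obtain ⟨a, b, hab, hav, hbv, haf, hbf, hvc, _⟩ := segment_struct hP hdim
    have hself : ∀ w, IsVertex P w → IsFacet P {w} ∧ w ∈ ({w} : Set (Fin n → ℝ)) := by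
      intro w hw
      rcases hvc w hw with rfl | rfl
      · exact ⟨haf, rfl⟩
      · exact ⟨hbf, rfl⟩
    refine ⟨?_, ?_, ?_⟩
    · intro w hw
      have hfin := facets_at_finite hP w
      have hpos : 0 < {K | IsFacet P K ∧ w ∈ K}.ncard :=
        (Set.ncard_pos hfin).2 ⟨{w}, hself w hw⟩
      omega
    · intro w hw p _ hall
      have h := hall {w} (hself w hw).1 rfl
      exact h
    · intro _ w hw
      rcases hvc w hw with rfl | rfl
      · exact ⟨{b}, hbf, by simp [hab]⟩
      · exact ⟨{a}, haf, by simp [Ne.symm hab]⟩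
  -- D ≥ 2
  have hD2 : 2 ≤ D := by omega
  obtain ⟨S, hPS⟩ := hP
  have hP' : IsPolytope P := ⟨S, hPS⟩
  have hctx : ∀ w, IsVertex P w → ∃ g : (Fin n → ℝ) →ₗ[ℝ] ℝ, ∃ cg : ℝ, VF.Ctx P S g cg w := by
    intro w hw
    obtain ⟨g, cg, hb, he⟩ := face_iff.1 hw
    exact ⟨g, cg, ⟨hPS, hb, he⟩⟩
  have hPneq : ∀ w : Fin n → ℝ, P ≠ {w} := by
    intro w hc
    rw [hc, sdim_singleton] at hdim
    omega
  -- part (a)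
  have parta : ∀ w, IsVertex P w → D ≤ {K | IsFacet P K ∧ w ∈ K}.ncard := by
    intro w hw
    obtain ⟨g, cg, ctx⟩ := hctx w hw
    set Z := VF.vfig S g cg w with hZ
    have hZpoly : IsPolytope Z := VF.vfig_polytope
    have hZ1 : sdim Z + 1 = D := by
      have hvs := VF.vfig_sdim ctx (hPneq w)
      rw [hZ]
      omega
    obtain ⟨himg, hinj⟩ := VF.facet_corr ctx (by omega)
    have hncard : {H | IsFacet Z H}.ncard = {K | IsFacet P K ∧ w ∈ K}.ncard := by
      rw [himg]
      exact Set.ncard_image_of_injOn hinj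
    rw [← hncard]
    obtain ⟨IHa, IHc, IHb⟩ := IH (sdim Z) (by omega) Z hZpoly rfl
    have hZne : Z.Nonempty := nonempty_of_sdim_pos (by omega)
    obtain ⟨z, hz⟩ := exists_vertex hZpoly hZne
    obtain ⟨H₀, hH₀f, hH₀z⟩ := IHb (by omega) z hz
    have hsub : insert H₀ {H | IsFacet Z H ∧ z ∈ H} ⊆ {H | IsFacet Z H} := by
      rintro H (rfl | hH)
      · exact hH₀f
      · exact hH.1
    have hfin1 := facets_at_finite hZpoly z
    have hnotmem : H₀ ∉ {H | IsFacet Z H ∧ z ∈ H} := fun h => hH₀z h.2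
    have h1 : (insert H₀ {H | IsFacet Z H ∧ z ∈ H}).ncard
        = {H | IsFacet Z H ∧ z ∈ H}.ncard + 1 :=
      Set.ncard_insert_of_notMem hnotmem hfin1
    have h2 : (insert H₀ {H | IsFacet Z H ∧ z ∈ H}).ncard ≤ {H | IsFacet Z H}.ncard :=
      Set.ncard_le_ncard hsub (facets_finite hZpoly)
    have h3 := IHa z hz
    omega
  -- part (c)
  have partc : ∀ w, IsVertex P w → ∀ p ∈ P, (∀ K, IsFacet P K → w ∈ K → p ∈ K) → p = w := by
    intro w hw p hp hall
    by_contra hpw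
    obtain ⟨g, cg, ctx⟩ := hctx w hw
    set Z := VF.vfig S g cg w with hZ
    have hZpoly : IsPolytope Z := VF.vfig_polytope
    have hZ1 : sdim Z + 1 = D := by
      have hvs := VF.vfig_sdim ctx (hPneq w)
      rw [hZ]
      omega
    obtain ⟨himg, hinj⟩ := VF.facet_corr ctx (by omega)
    set A := {K | IsFacet P K ∧ w ∈ K} with hA
    have hAfin := facets_at_finite hP' w
    have hAne : A.Nonempty := by
      have := parta w hw
      exact Set.nonempty_of_ncard_ne_zero (by rw [hA]; omega)
    have hMface : IsFace P (⋂₀ A) := face_sInter hAfin hAne (fun K hK => hK.1.1)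
    have hwM : w ∈ ⋂₀ A := fun K hK => hK.2
    have hpM : p ∈ ⋂₀ A := fun K hK => hall K hK.1 hK.2
    have hMne : ⋂₀ A ≠ {w} := by
      intro hc
      rw [hc] at hpM
      exact hpw hpM
    obtain ⟨hphiMne, _⟩ := VF.phi_sdim ctx hMface hwM hMne
    have hphiface : IsFace Z (VF.phi S g cg w (⋂₀ A)) := (VF.phi_spec ctx hMface hwM).1
    obtain ⟨z, hzv, hzmem⟩ := face_has_vertex hZpoly hphiface hphiMne
    obtain ⟨IHa, IHc, IHb⟩ := IH (sdim Z) (by omega) Z hZpoly rfl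
    obtain ⟨H₀, hH₀f, hH₀z⟩ := IHb (by omega) z hzv
    apply hH₀z
    have hH₀img : H₀ ∈ VF.phi S g cg w '' A := by rw [← himg]; exact hH₀f
    obtain ⟨K, hKA, hKe⟩ := hH₀img
    have hMK : ⋂₀ A ⊆ K := Set.sInter_subset_of_mem hKA
    have : VF.phi S g cg w (⋂₀ A) ⊆ H₀ := by
      rw [← hKe]
      exact VF.phi_mono hMK
    exact this hzmem
  -- part (b)
  have partb : ∀ w, IsVertex P w → ∃ K, IsFacet P K ∧ w ∉ K := by
    intro w hw
    by_contra hc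
    push_neg at hc
    have hex : ∃ w', IsVertex P w' ∧ w' ≠ w := by
      by_contra hc2
      push_neg at hc2
      have hsub : {z | IsVertex P z} ⊆ {w} := fun z hz => hc2 z hz
      have hQsub : P ⊆ {w} := by
        have hkm := poly_hull_vertices hP'
        calc P = convexHull ℝ {z | IsVertex P z} := hkm
          _ ⊆ convexHull ℝ {w} := convexHull_mono hsub
          _ = {w} := convexHull_singleton w
      have := sdim_mono hQsub
      rw [sdim_singleton] at this
      omega
    obtain ⟨w', hw', hww⟩ := hex
    exact hww (partc w' hw' w (vertex_mem hw) (fun K hK _ => hc K hK)).symm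
  exact ⟨parta, partc, fun _ => partb⟩

end PolyAux

open PolyAux in
theorem stmt5 {n d : ℕ} (hd : 1 < d) (P : Set (Fin n → ℝ))
    (hP : IsPolytope P) (hdim : sdim P = d) (hsimple : IsSimplePolytope P)
    (u v : Fin n → ℝ) (hu : IsVertex P u) (hv : IsVertex P v)
    (F : Set (Fin n → ℝ)) (hF : IsFacet P F) (huF : u ∈ F) (hvF : v ∈ F)
    (huniq : ∀ G, IsFacet P G → u ∈ G → v ∈ G → G = F) :
    (∃! x, IsVertex P x ∧ Adjacent P v x ∧ x ∉ F) ∧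
    (∀ x, IsVertex P x → Adjacent P v x → x ∉ F →
      {G | IsFacet P G ∧ u ∈ G ∧ x ∈ G}.ncard ≤ 1 ∧
      ¬ ∃ G, IsFacet P G ∧ u ∈ G ∧ v ∈ G ∧ x ∈ G) := by
  obtain ⟨S, hPS⟩ := hP
  have hP' : IsPolytope P := ⟨S, hPS⟩
  obtain ⟨g, cg, hgb, hgv⟩ := face_iff.1 hv
  have ctx : VF.Ctx P S g cg v := ⟨hPS, hgb, hgv⟩
  have hZpoly : IsPolytope (VF.vfig S g cg v) := VF.vfig_polytope
  have hPneq : ∀ w : Fin n → ℝ, P ≠ {w} := by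
    intro w hc
    rw [hc, sdim_singleton] at hdim
    omega
  have hZ1 : sdim (VF.vfig S g cg v) + 1 = d := by
    have hvs := VF.vfig_sdim ctx (hPneq v)
    omega
  obtain ⟨himg, hinj⟩ := VF.facet_corr ctx (by omega)
  obtain ⟨Ia, Ic, Ib⟩ := main_ind (sdim (VF.vfig S g cg v)) (VF.vfig S g cg v) hZpoly rfl
  have hZfacets : {H | IsFacet (VF.vfig S g cg v) H}.ncard = d := by
    rw [himg, Set.ncard_image_of_injOn hinj]
    rw [hsimple v hv, hdim]
  have hK₁facet : IsFacet (VF.vfig S g cg v) (VF.phi S g cg v F) := by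
    have : VF.phi S g cg v F ∈ {H | IsFacet (VF.vfig S g cg v) H} := by
      rw [himg]
      exact ⟨F, ⟨hF, hvF⟩, rfl⟩
    exact this
  have hK₁mem : VF.phi S g cg v F ∈ {H | IsFacet (VF.vfig S g cg v) H} := hK₁facet
  -- facets of Z at a vertex avoiding K₁
  have hyfacets : ∀ y₀, IsVertex (VF.vfig S g cg v) y₀ → y₀ ∉ VF.phi S g cg v F →
      {H | IsFacet (VF.vfig S g cg v) H ∧ y₀ ∈ H}
        = {H | IsFacet (VF.vfig S g cg v) H} \ {VF.phi S g cg v F} := by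
    intro y₀ hy₀ hy₀K
    have hsub : {H | IsFacet (VF.vfig S g cg v) H ∧ y₀ ∈ H}
        ⊆ {H | IsFacet (VF.vfig S g cg v) H} \ {VF.phi S g cg v F} := by
      rintro H ⟨hHf, hyH⟩
      refine ⟨hHf, ?_⟩
      rw [Set.mem_singleton_iff]
      rintro rfl
      exact hy₀K hyH
    have hfin : ({H | IsFacet (VF.vfig S g cg v) H} \ {VF.phi S g cg v F}).Finite :=
      (facets_finite hZpoly).subset Set.diff_subset
    have hdiff : ({H | IsFacet (VF.vfig S g cg v) H} \ {VF.phi S g cg v F}).ncard = d - 1 := by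
      rw [Set.ncard_diff_singleton_of_mem hK₁mem, hZfacets]
    have hle : ({H | IsFacet (VF.vfig S g cg v) H} \ {VF.phi S g cg v F}).ncard
        ≤ {H | IsFacet (VF.vfig S g cg v) H ∧ y₀ ∈ H}.ncard := by
      have := Ia y₀ hy₀
      omega
    exact Set.eq_of_subset_of_ncard_le hsub hle hfin
  have huniqY : ∀ y₁ y₂, IsVertex (VF.vfig S g cg v) y₁ → IsVertex (VF.vfig S g cg v) y₂ →
      y₁ ∉ VF.phi S g cg v F → y₂ ∉ VF.phi S g cg v F → y₁ = y₂ := by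
    intro y₁ y₂ h1 h2 h1K h2K
    have e1 := hyfacets y₁ h1 h1K
    have e2 := hyfacets y₂ h2 h2K
    refine (Ic y₁ h1 y₂ (vertex_mem h2) ?_).symm
    intro H hH hy₁H
    have hmem : H ∈ {H | IsFacet (VF.vfig S g cg v) H ∧ y₁ ∈ H} := ⟨hH, hy₁H⟩
    rw [e1, ← e2] at hmem
    exact hmem.2
  -- existence of vertex y ∉ K₁
  have hexY : ∃ y, IsVertex (VF.vfig S g cg v) y ∧ y ∉ VF.phi S g cg v F := by
    by_contra hc
    push_neg at hc
    have hsub : {z | IsVertex (VF.vfig S g cg v) z} ⊆ VF.phi S g cg v F :=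
      fun z hz => hc z hz
    have hZsub : VF.vfig S g cg v ⊆ VF.phi S g cg v F := by
      calc VF.vfig S g cg v = convexHull ℝ {z | IsVertex (VF.vfig S g cg v) z} :=
            poly_hull_vertices hZpoly
        _ ⊆ convexHull ℝ (VF.phi S g cg v F) := convexHull_mono hsub
        _ = VF.phi S g cg v F := (face_convex hZpoly hK₁facet.1).convexHull_eq
    have heq : VF.phi S g cg v F = VF.vfig S g cg v :=
      Subset.antisymm (face_subset hK₁facet.1) hZsub
    have := hK₁facet.2.2
    rw [heq] at this
    omega
  obtain ⟨y, hyv, hyK⟩ := hexY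
  -- the edge E = psi {y} and its endpoint x
  obtain ⟨hEface, hvE, hEdim, hEnev⟩ := VF.psi_singleton_edge ctx hyv
  obtain ⟨x, hxvert, hxv, hxE, hxclass⟩ := VF.endpoint ctx hyv
  have hxS : x ∈ S := vertex_mem_S hPS hxvert
  have hnmx : VF.nm g cg v x = y := by
    have := (VF.psi_spec ctx (hyv : IsFace (VF.vfig S g cg v) {y})).2.2 x
      (Finset.mem_coe.2 hxS) hxv
    exact this.1 hxE
  have hxF : x ∉ F := by
    intro hxFmem
    apply hyK
    rw [← hnmx]
    exact ((VF.phi_spec ctx hF.1 hvF).2 x (Finset.mem_coe.2 hxS) hxv).1 hxFmem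
  have hadj : Adjacent P v x :=
    ⟨Ne.symm hxv, VF.psi S g cg v {y}, ⟨hEface, hEdim⟩, hvE, hxE⟩
  -- uniqueness
  have huniqX : ∀ x', IsVertex P x' → Adjacent P v x' → x' ∉ F → x' = x := by
    intro x' hx'v hx'adj hx'F
    obtain ⟨hvx', E', hE'edge, hvE', hx'E'⟩ := hx'adj
    have hE'face : IsFace P E' := hE'edge.1
    have hE'nev : E' ≠ {v} := by
      intro hc
      have := hE'edge.2
      rw [hc, sdim_singleton] at this
      omega
    obtain ⟨hphiE'ne, hphiE'dim⟩ := VF.phi_sdim ctx hE'face hvE' hE'nev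
    have hphiE'0 : sdim (VF.phi S g cg v E') = 0 := by
      have := hE'edge.2
      omega
    obtain ⟨y', hy'mem⟩ := hphiE'ne
    have hsingle : VF.phi S g cg v E' = {y'} := by
      apply Subset.antisymm
      · intro z hz
        exact (sdim_zero_subsingleton hphiE'0) hz hy'mem
      · rintro z rfl
        exact hy'mem
    have hy'vert : IsVertex (VF.vfig S g cg v) y' := by
      show IsFace _ {y'}
      rw [← hsingle]
      exact (VF.phi_spec ctx hE'face hvE').1
    have hy'K : y' ∉ VF.phi S g cg v F := by
      intro hy'Kmem
      have hE'F : E' ⊆ F := by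
        have h1 : E' = VF.psi S g cg v (VF.phi S g cg v E') := (VF.psi_phi ctx hE'face hvE').symm
        have h2 : F = VF.psi S g cg v (VF.phi S g cg v F) := (VF.psi_phi ctx hF.1 hvF).symm
        rw [h1, h2, hsingle]
        exact VF.psi_mono (Set.singleton_subset_iff.2 hy'Kmem)
      exact hx'F (hE'F hx'E')
    have hyy' : y' = y := huniqY y' y hy'vert hyv hy'K hyK
    have hE'E : E' = VF.psi S g cg v {y} := by
      rw [← hyy', ← hsingle]
      exact (VF.psi_phi ctx hE'face hvE').symm
    rcases hxclass x' hx'v (hE'E ▸ hx'E') with h | h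
    · exact absurd h.symm hvx'
    · exact h
  constructor
  · exact ⟨x, ⟨hxvert, hadj, hxF⟩, fun x' ⟨h1, h2, h3⟩ => huniqX x' h1 h2 h3⟩
  · intro x₀ hx₀v hx₀adj hx₀F
    have hx₀ : x₀ = x := huniqX x₀ hx₀v hx₀adj hx₀F
    rw [hx₀]
    constructor
    · -- the counting argument
      have hBeq : {G | IsFacet P G ∧ VF.psi S g cg v {y} ⊆ G}
          = VF.psi S g cg v '' {H | IsFacet (VF.vfig S g cg v) H ∧ y ∈ H} := by
        ext G
        simp only [Set.mem_setOf_eq, Set.mem_image]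
        constructor
        · rintro ⟨hGf, hEG⟩
          have hvG : v ∈ G := hEG hvE
          have hGimg : VF.phi S g cg v G ∈ {H | IsFacet (VF.vfig S g cg v) H} := by
            rw [himg]
            exact ⟨G, ⟨hGf, hvG⟩, rfl⟩
          refine ⟨VF.phi S g cg v G, ⟨hGimg, ?_⟩, VF.psi_phi ctx hGf.1 hvG⟩
          have hyE : ({y} : Set (Fin n → ℝ)) = VF.phi S g cg v (VF.psi S g cg v {y}) :=
            (VF.phi_psi ctx (hyv : IsFace (VF.vfig S g cg v) {y})).symm
          have : ({y} : Set (Fin n → ℝ)) ⊆ VF.phi S g cg v G := by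
            rw [hyE]
            exact VF.phi_mono hEG
          exact this rfl
        · rintro ⟨H, ⟨hHf, hyH⟩, rfl⟩
          have hHimg : H ∈ VF.phi S g cg v '' {K | IsFacet P K ∧ v ∈ K} := by
            rw [← himg]; exact hHf
          obtain ⟨K, ⟨hKf, hvK⟩, rfl⟩ := hHimg
          rw [VF.psi_phi ctx hKf.1 hvK]
          refine ⟨hKf, ?_⟩
          have h1 : VF.psi S g cg v {y} ⊆ VF.psi S g cg v (VF.phi S g cg v K) :=
            VF.psi_mono (Set.singleton_subset_iff.2 hyH)
          rwa [VF.psi_phi ctx hKf.1 hvK] at h1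
      have hpsiInj : Set.InjOn (VF.psi S g cg v) {H | IsFacet (VF.vfig S g cg v) H ∧ y ∈ H} := by
        intro H₁ h₁ H₂ h₂ he
        have e1 := VF.phi_psi ctx h₁.1.1
        have e2 := VF.phi_psi ctx h₂.1.1
        rw [← e1, ← e2, he]
      have hBcard : {G | IsFacet P G ∧ VF.psi S g cg v {y} ⊆ G}.ncard = d - 1 := by
        rw [hBeq, Set.ncard_image_of_injOn hpsiInj, hyfacets y hyv hyK,
          Set.ncard_diff_singleton_of_mem hK₁mem, hZfacets]
      have hAcard : {G | IsFacet P G ∧ x ∈ G}.ncard = d := by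
        rw [hsimple x hxvert, hdim]
      have hCsub : {G | IsFacet P G ∧ u ∈ G ∧ x ∈ G} ∪ {G | IsFacet P G ∧ VF.psi S g cg v {y} ⊆ G}
          ⊆ {G | IsFacet P G ∧ x ∈ G} := by
        rintro G (⟨h1, _, h3⟩ | ⟨h1, h2⟩)
        · exact ⟨h1, h3⟩
        · exact ⟨h1, h2 hxE⟩
      have hdisj : Disjoint {G | IsFacet P G ∧ u ∈ G ∧ x ∈ G}
          {G | IsFacet P G ∧ VF.psi S g cg v {y} ⊆ G} := by
        rw [Set.disjoint_left]
        rintro G ⟨hGf, huG, hxG⟩ ⟨_, hEG⟩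
        have hvG : v ∈ G := hEG hvE
        have := huniq G hGf huG hvG
        subst this
        exact hxF hxG
      have hCfin : {G | IsFacet P G ∧ u ∈ G ∧ x ∈ G}.Finite :=
        (facets_finite hP').subset (fun _ h => h.1)
      have hBfin : {G | IsFacet P G ∧ VF.psi S g cg v {y} ⊆ G}.Finite :=
        (facets_finite hP').subset (fun _ h => h.1)
      have hub := Set.ncard_union_eq hdisj hCfin hBfin
      have hle : ({G | IsFacet P G ∧ u ∈ G ∧ x ∈ G}
          ∪ {G | IsFacet P G ∧ VF.psi S g cg v {y} ⊆ G}).ncard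
          ≤ {G | IsFacet P G ∧ x ∈ G}.ncard :=
        Set.ncard_le_ncard hCsub ((facets_finite hP').subset (fun _ h => h.1))
      omega
    · rintro ⟨G, hGf, huG, hvG, hxG⟩
      have := huniq G hGf huG hvG
      subst this
      exact hxF hxG
end

section
/- Let P be a simple polytope of dimension d > 1, let u, v be vertices of P that lie on exactly one common facet F, and let x be the unique vertex adjacent to v with x ∉ F. Then the set of facets of P that contain the vertex u or contain the edge joining v and x equals the set of all facets of P that contain u or contain v, and this set has exactly 2d − 1 elements. -/
set_option maxHeartbeats 2000000
set_option synthInstance.maxHeartbeats 1000000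

section Poly6Aux

variable {n : ℕ} {P F G : Set (Fin n → ℝ)}

lemma pp6_face_subset (h : IsFace P F) : F ⊆ P := by
  rcases h with rfl | rfl | ⟨f, c, hle, rfl⟩
  · exact Set.empty_subset _
  · exact subset_rfl
  · exact fun y hy => hy.1

lemma pp6_face_convex (hP : Convex ℝ P) (h : IsFace P F) : Convex ℝ F := by
  rcases h with rfl | rfl | ⟨f, c, hle, rfl⟩
  · exact convex_empty
  · exact hP
  · intro y hy z hz a b ha hb hab
    refine ⟨hP hy.1 hz.1 ha hb hab, ?_⟩
    simp only [map_add, map_smul, smul_eq_mul, hy.2, hz.2, ← add_mul, hab, one_mul]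

lemma pp6_face_exposed (h : IsFace P F) (hne : F.Nonempty) (hP : F ≠ P) :
    ∃ (f : (Fin n → ℝ) →ₗ[ℝ] ℝ) (c : ℝ), (∀ x ∈ P, f x ≤ c) ∧ F = {x ∈ P | f x = c} := by
  rcases h with rfl | rfl | h
  · exact absurd hne (by simp)
  · exact absurd rfl hP
  · exact h

lemma pp6_vectorSpan_le_ker {s : Set (Fin n → ℝ)} {f : (Fin n → ℝ) →ₗ[ℝ] ℝ} {c : ℝ}
    (h : ∀ y ∈ s, f y = c) : vectorSpan ℝ s ≤ LinearMap.ker f := by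
  rw [vectorSpan_def, Submodule.span_le]
  rintro w ⟨y, hy, z, hz, rfl⟩
  simp [LinearMap.mem_ker, vsub_eq_sub, map_sub, h y hy, h z hz]

lemma pp6_subrank (U : Submodule ℝ (Fin n → ℝ)) (f : (Fin n → ℝ) →ₗ[ℝ] ℝ) :
    Module.finrank ℝ U ≤ Module.finrank ℝ ↥(U ⊓ LinearMap.ker f) + 1 := by
  classical
  set g := f.comp U.subtype with hg
  have h1 : Module.finrank ℝ ↥(LinearMap.ker g) = Module.finrank ℝ ↥(U ⊓ LinearMap.ker f) := by
    have : (LinearMap.ker g).map U.subtype = U ⊓ LinearMap.ker f := by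
      rw [hg, LinearMap.ker_comp, Submodule.map_comap_subtype]
    rw [← this]
    exact (Submodule.equivMapOfInjective _ (Submodule.injective_subtype U) _).finrank_eq
  have h2 := LinearMap.finrank_range_add_finrank_ker g
  have h3 : Module.finrank ℝ ↥(LinearMap.range g) ≤ 1 := by
    simpa using Submodule.finrank_le (LinearMap.range g)
  omega

lemma pp6_sdim_lt (hG : IsFace P G) (hF : IsFace P F) (hne : G.Nonempty) (hss : G ⊂ F) :
    sdim G < sdim F := by
  have hGP : G ≠ P := by
    intro h
    exact hss.not_subset (h ▸ pp6_face_subset hF)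
  obtain ⟨f, c, hle, hGeq⟩ := pp6_face_exposed hG hne hGP
  obtain ⟨y₀, hy₀F, hy₀G⟩ := Set.exists_of_ssubset hss
  obtain ⟨g₀, hg₀⟩ := hne
  have hmono : vectorSpan ℝ G ≤ vectorSpan ℝ F := vectorSpan_mono ℝ hss.subset
  by_contra hcon
  push_neg at hcon
  have heq : vectorSpan ℝ G = vectorSpan ℝ F :=
    Submodule.eq_of_le_of_finrank_le hmono hcon
  have hker : vectorSpan ℝ G ≤ LinearMap.ker f :=
    pp6_vectorSpan_le_ker (fun y hy => (hGeq ▸ hy : _ ∧ _).2)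
  have hy0 : y₀ -ᵥ g₀ ∈ vectorSpan ℝ F := vsub_mem_vectorSpan ℝ hy₀F (hss.subset hg₀)
  rw [← heq] at hy0
  have : f (y₀ - g₀) = 0 := hker hy0
  have hfy : f y₀ = c := by
    have hg : f g₀ = c := (hGeq ▸ hg₀ : _ ∧ _).2
    have h0 : f y₀ - f g₀ = 0 := by rw [← map_sub]; exact this
    linarith
  exact hy₀G (hGeq ▸ ⟨pp6_face_subset hF hy₀F, hfy⟩)

lemma pp6_relint_ball {P : Set (Fin n → ℝ)} {p : Fin n → ℝ}
    (hp : p ∈ intrinsicInterior ℝ P) :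
    ∃ ε > 0, ∀ w ∈ vectorSpan ℝ P, ‖w‖ < ε → p + w ∈ P := by
  obtain ⟨p', hp', rfl⟩ := hp
  rw [mem_interior_iff_mem_nhds, Metric.mem_nhds_iff] at hp'
  obtain ⟨ε, hε, hball⟩ := hp'
  refine ⟨ε, hε, fun w hw hwε => ?_⟩
  have hwdir : w ∈ (affineSpan ℝ P).direction := by
    rw [direction_affineSpan]; exact hw
  have hmem : ↑p' + w ∈ affineSpan ℝ P := by
    have := AffineSubspace.vadd_mem_of_mem_direction hwdir p'.2
    simpa [vadd_eq_add, add_comm] using this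
  have : (⟨↑p' + w, hmem⟩ : affineSpan ℝ P) ∈ Metric.ball p' ε := by
    rw [Metric.mem_ball, Subtype.dist_eq]
    simpa [dist_eq_norm] using hwε
  exact hball this

lemma pp6_relint_const {P : Set (Fin n → ℝ)} {f : (Fin n → ℝ) →ₗ[ℝ] ℝ} {c : ℝ}
    (hle : ∀ y ∈ P, f y ≤ c) {p : Fin n → ℝ} (hp : p ∈ intrinsicInterior ℝ P)
    (hfp : f p = c) {q : Fin n → ℝ} (hq : q ∈ P) : f q = c := by
  obtain ⟨ε, hε, hball⟩ := pp6_relint_ball hp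
  have hpP : p ∈ P := intrinsicInterior_subset hp
  have hdir : p - q ∈ vectorSpan ℝ P := by
    simpa [vsub_eq_sub] using vsub_mem_vectorSpan ℝ hpP hq
  set t : ℝ := ε / (2 * (‖p - q‖ + 1)) with ht
  have hnorm : 0 ≤ ‖p - q‖ := norm_nonneg _
  have htpos : 0 < t := by positivity
  have hsmall : ‖t • (p - q)‖ < ε := by
    rw [norm_smul, Real.norm_eq_abs, abs_of_pos htpos, ht]
    rw [div_mul_eq_mul_div, div_lt_iff₀ (by positivity)]
    nlinarith
  have hPmem : p + t • (p - q) ∈ P :=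
    hball _ (Submodule.smul_mem _ _ hdir) hsmall
  have := hle _ hPmem
  simp only [map_add, map_smul, map_sub, smul_eq_mul, hfp] at this
  have hfq := hle q hq
  nlinarith

lemma pp6_le_on_hull {S : Set (Fin n → ℝ)} {f : (Fin n → ℝ) →ₗ[ℝ] ℝ} {c : ℝ}
    (h : ∀ s ∈ S, f s ≤ c) : ∀ y ∈ convexHull ℝ S, f y ≤ c := fun y hy =>
  convexHull_min h (convex_halfSpace_le f.isLinear c) hy

lemma pp6_face_eq_hull_filter (S : Finset (Fin n → ℝ)) (f : (Fin n → ℝ) →ₗ[ℝ] ℝ) (c : ℝ)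
    (hle : ∀ s ∈ (S : Set (Fin n → ℝ)), f s ≤ c) :
    {y ∈ convexHull ℝ (S : Set (Fin n → ℝ)) | f y = c} =
      convexHull ℝ {s : Fin n → ℝ | s ∈ (S : Set (Fin n → ℝ)) ∧ f s = c} := by
  classical
  apply Set.Subset.antisymm
  · rintro y ⟨hyP, hyc⟩
    rw [Finset.convexHull_eq] at hyP
    obtain ⟨w, hw0, hw1, hwy⟩ := hyP
    have hfy : ∑ s ∈ S, w s * f s = c := by
      have : f y = ∑ s ∈ S, w s * f s := by
        rw [← hwy, Finset.centerMass_eq_of_sum_1 _ _ hw1]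
        simp [map_sum, map_smul]
      rw [← this, hyc]
    have hsum0 : ∑ s ∈ S, w s * (c - f s) = 0 := by
      simp only [mul_sub]
      rw [Finset.sum_sub_distrib, hfy, ← Finset.sum_mul, hw1, one_mul, sub_self]
    have hterm : ∀ s ∈ S, w s > 0 → f s = c := by
      intro s hs hws
      have hz := (Finset.sum_eq_zero_iff_of_nonneg (fun s hs =>
        mul_nonneg (hw0 s hs) (by linarith [hle s (by exact_mod_cast hs)]))).mp hsum0 s hs
      have : c - f s = 0 := by
        rcases mul_eq_zero.mp hz with h | h
        · exact absurd h (ne_of_gt hws)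
        · exact h
      linarith
    have hy' : y = (S.filter fun s => w s ≠ 0).centerMass w id := by
      rw [Finset.centerMass_filter_ne_zero, hwy]
    rw [hy']
    apply Finset.centerMass_mem_convexHull
    · intro i hi; exact hw0 i (Finset.mem_filter.mp hi).1
    · rw [Finset.sum_filter_ne_zero, hw1]; norm_num
    · intro i hi
      obtain ⟨hiS, hiw⟩ := Finset.mem_filter.mp hi
      exact ⟨by exact_mod_cast hiS, hterm i hiS (lt_of_le_of_ne (hw0 i hiS) (Ne.symm hiw))⟩
  · apply convexHull_min
    · rintro s ⟨hsS, hsc⟩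
      exact ⟨subset_convexHull ℝ _ hsS, hsc⟩
    · intro y hy z hz a b ha hb hab
      refine ⟨(convex_convexHull ℝ _) hy.1 hz.1 ha hb hab, ?_⟩
      simp only [map_add, map_smul, smul_eq_mul, hy.2, hz.2, ← add_mul, hab, one_mul]

lemma pp6_exists_pair_functionals (A Vp : Submodule ℝ (Fin n → ℝ)) (hAV : A ≤ Vp)
    (hdim : Module.finrank ℝ ↥A + 2 ≤ Module.finrank ℝ ↥Vp) :
    ∃ (φ₁ φ₂ : (Fin n → ℝ) →ₗ[ℝ] ℝ) (v₁ v₂ : Fin n → ℝ),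
      v₁ ∈ Vp ∧ v₂ ∈ Vp ∧ (∀ a ∈ A, φ₁ a = 0) ∧ (∀ a ∈ A, φ₂ a = 0) ∧
      φ₁ v₁ = 1 ∧ φ₁ v₂ = 0 ∧ φ₂ v₁ = 0 ∧ φ₂ v₂ = 1 := by
  classical
  let p : Submodule ℝ ↥Vp := A.comap Vp.subtype
  have hpA : Module.finrank ℝ ↥p = Module.finrank ℝ ↥A := by
    have hmap : p.map Vp.subtype = A := by
      rw [Submodule.map_comap_subtype, inf_eq_right.mpr hAV]
    conv_rhs => rw [← hmap]
    exact (Submodule.equivMapOfInjective _ (Submodule.injective_subtype Vp) p).finrank_eq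
  have hrankT : Module.finrank ℝ (↥Vp ⧸ p) + Module.finrank ℝ ↥p = Module.finrank ℝ ↥Vp :=
    Submodule.finrank_quotient_add_finrank p
  have h2N : 2 ≤ Module.finrank ℝ (↥Vp ⧸ p) := by omega
  let bT := Module.finBasis ℝ (↥Vp ⧸ p)
  let i0 : Fin (Module.finrank ℝ (↥Vp ⧸ p)) := ⟨0, by omega⟩
  let i1 : Fin (Module.finrank ℝ (↥Vp ⧸ p)) := ⟨1, by omega⟩
  have hne : i0 ≠ i1 := by simp [i0, i1, Fin.ext_iff]
  obtain ⟨K, hK⟩ := Submodule.exists_isCompl Vp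
  let proj := Vp.linearProjOfIsCompl K hK
  obtain ⟨w0, hw0⟩ := Submodule.mkQ_surjective p (bT i0)
  obtain ⟨w1, hw1⟩ := Submodule.mkQ_surjective p (bT i1)
  have hproj : ∀ (w : ↥Vp), proj (w : Fin n → ℝ) = w :=
    fun w => Submodule.linearProjOfIsCompl_apply_left hK w
  refine ⟨(bT.coord i0).comp (p.mkQ.comp proj), (bT.coord i1).comp (p.mkQ.comp proj),
    ↑w0, ↑w1, w0.2, w1.2, ?_, ?_, ?_, ?_, ?_, ?_⟩
  · intro a ha
    have h1 : proj a = ⟨a, hAV ha⟩ := hproj ⟨a, hAV ha⟩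
    have h2 : p.mkQ ⟨a, hAV ha⟩ = 0 := (Submodule.Quotient.mk_eq_zero p).mpr ha
    simp [h1, h2]
  · intro a ha
    have h1 : proj a = ⟨a, hAV ha⟩ := hproj ⟨a, hAV ha⟩
    have h2 : p.mkQ ⟨a, hAV ha⟩ = 0 := (Submodule.Quotient.mk_eq_zero p).mpr ha
    simp [h1, h2]
  · simp only [LinearMap.comp_apply, hproj w0, Submodule.mkQ_apply, hw0]
    simp [Module.Basis.coord_apply]
  · simp only [LinearMap.comp_apply, hproj w1, Submodule.mkQ_apply, hw1]
    simp [Module.Basis.coord_apply, Finsupp.single_apply, hne, hne.symm]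
  · simp only [LinearMap.comp_apply, hproj w0, Submodule.mkQ_apply, hw0]
    simp [Module.Basis.coord_apply, Finsupp.single_apply, hne, hne.symm]
  · simp only [LinearMap.comp_apply, hproj w1, Submodule.mkQ_apply, hw1]
    simp [Module.Basis.coord_apply]

lemma pp6_step (S : Finset (Fin n → ℝ)) (f : (Fin n → ℝ) →ₗ[ℝ] ℝ) (c : ℝ)
    (hle : ∀ y ∈ convexHull ℝ (S : Set (Fin n → ℝ)), f y ≤ c)
    (hne : {y ∈ convexHull ℝ (S : Set (Fin n → ℝ)) | f y = c}.Nonempty)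
    (hdim : sdim {y ∈ convexHull ℝ (S : Set (Fin n → ℝ)) | f y = c} + 2 ≤
      sdim (convexHull ℝ (S : Set (Fin n → ℝ)))) :
    ∃ (f' : (Fin n → ℝ) →ₗ[ℝ] ℝ) (c' : ℝ),
      (∀ y ∈ convexHull ℝ (S : Set (Fin n → ℝ)), f' y ≤ c') ∧
      {y ∈ convexHull ℝ (S : Set (Fin n → ℝ)) | f y = c} ⊆
        {y ∈ convexHull ℝ (S : Set (Fin n → ℝ)) | f' y = c'} ∧
      {y ∈ convexHull ℝ (S : Set (Fin n → ℝ)) | f' y = c'} ≠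
        {y ∈ convexHull ℝ (S : Set (Fin n → ℝ)) | f y = c} ∧
      {y ∈ convexHull ℝ (S : Set (Fin n → ℝ)) | f' y = c'} ≠
        convexHull ℝ (S : Set (Fin n → ℝ)) := by
  classical
  set P := convexHull ℝ (S : Set (Fin n → ℝ)) with hPdef
  set G := {y ∈ P | f y = c} with hGdef
  obtain ⟨g₀, hg₀⟩ := hne
  have hGP : G ⊆ P := fun y hy => hy.1
  obtain ⟨φ₁, φ₂, v₁, v₂, hv₁, hv₂, hφ₁A, hφ₂A, h11, h12, h21, h22⟩ :=
    pp6_exists_pair_functionals (vectorSpan ℝ G) (vectorSpan ℝ P) (vectorSpan_mono ℝ hGP) hdim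
  -- φ constant on G
  have hGconst : ∀ (ψ : (Fin n → ℝ) →ₗ[ℝ] ℝ), (∀ a ∈ vectorSpan ℝ G, ψ a = 0) →
      ∀ y ∈ G, ψ y = ψ g₀ := by
    intro ψ hψ y hy
    have hmem : y - g₀ ∈ vectorSpan ℝ G := by
      simpa [vsub_eq_sub] using vsub_mem_vectorSpan ℝ hy hg₀
    have := hψ _ hmem
    rw [map_sub] at this
    linarith
  -- killing lemma
  have hkill : ∀ (χ : (Fin n → ℝ) →ₗ[ℝ] ℝ) (d : ℝ), (∀ s ∈ S, χ s = d) →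
      ∀ y ∈ vectorSpan ℝ P, χ y = 0 := by
    intro χ d hχ y hy
    have h1 : vectorSpan ℝ P = vectorSpan ℝ (S : Set (Fin n → ℝ)) := by
      rw [hPdef, ← direction_affineSpan, affineSpan_convexHull, direction_affineSpan]
    exact pp6_vectorSpan_le_ker hχ (h1 ▸ hy)
  -- each φ i is nonconstant on S
  have hnonconst : ∀ (ψ : (Fin n → ℝ) →ₗ[ℝ] ℝ) (w : Fin n → ℝ), w ∈ vectorSpan ℝ P →
      ψ w = 1 → ∃ s ∈ S, ψ s ≠ ψ g₀ := by
    intro ψ w hw hψw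
    by_contra hcon
    push_neg at hcon
    have := hkill ψ (ψ g₀) hcon w hw
    rw [hψw] at this
    norm_num at this
  -- core rotation construction
  have rot : ∀ (ψ : (Fin n → ℝ) →ₗ[ℝ] ℝ), (∀ y ∈ G, ψ y = ψ g₀) → (∃ s ∈ S, ψ s ≠ ψ g₀) →
      (∃ (f' : (Fin n → ℝ) →ₗ[ℝ] ℝ) (c' : ℝ),
        (∀ y ∈ P, f' y ≤ c') ∧ G ⊆ {y ∈ P | f' y = c'} ∧
        {y ∈ P | f' y = c'} ≠ G ∧ {y ∈ P | f' y = c'} ≠ P) ∨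
      (∃ t : ℝ, 0 < t ∧ ∃ θ : (Fin n → ℝ) →ₗ[ℝ] ℝ, (θ = ψ ∨ θ = -ψ) ∧
        ∀ s ∈ S, f s + t * θ s = c + t * θ g₀) := by
    rintro ψ hψG ⟨s', hs'S, hs'⟩
    obtain ⟨θ, hθsign, hθG, s'', hs''S, hs''⟩ :
        ∃ θ : (Fin n → ℝ) →ₗ[ℝ] ℝ, (θ = ψ ∨ θ = -ψ) ∧ (∀ y ∈ G, θ y = θ g₀) ∧
          ∃ s ∈ S, θ g₀ < θ s := by
      rcases lt_or_gt_of_ne hs' with h | h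
      · refine ⟨-ψ, Or.inr rfl, fun y hy => by simp [hψG y hy], s', hs'S, by simp; linarith⟩
      · exact ⟨ψ, Or.inl rfl, hψG, s', hs'S, h⟩
    have hfltc : ∀ s ∈ S, θ g₀ < θ s → f s < c := by
      intro s hsS hsθ
      have hsP : s ∈ P := subset_convexHull ℝ _ hsS
      rcases lt_or_eq_of_le (hle s hsP) with h | h
      · exact h
      · exact absurd (hθG s ⟨hsP, h⟩ ▸ hsθ) (lt_irrefl _)
    set Tset := S.filter (fun s => θ g₀ < θ s) with hTset
    have hTne : Tset.Nonempty := ⟨s'', Finset.mem_filter.mpr ⟨hs''S, hs''⟩⟩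
    set tstar := Tset.inf' hTne (fun s => (c - f s) / (θ s - θ g₀)) with htstar
    have htpos : 0 < tstar := by
      rw [htstar, Finset.lt_inf'_iff]
      intro s hs
      obtain ⟨hsS, hsθ⟩ := Finset.mem_filter.mp hs
      exact div_pos (by linarith [hfltc s hsS hsθ]) (by linarith)
    have hkey : ∀ s ∈ S, f s + tstar * θ s ≤ c + tstar * θ g₀ := by
      intro s hsS
      by_cases hsθ : θ g₀ < θ s
      · have hmem : s ∈ Tset := Finset.mem_filter.mpr ⟨hsS, hsθ⟩
        have h1 : tstar ≤ (c - f s) / (θ s - θ g₀) := Finset.inf'_le _ hmem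
        have h2 : tstar * (θ s - θ g₀) ≤ c - f s := by
          rw [← div_mul_cancel₀ (c - f s) (ne_of_gt (by linarith : (0:ℝ) < θ s - θ g₀))]
          exact mul_le_mul_of_nonneg_right h1 (by linarith)
        nlinarith
      · push_neg at hsθ
        have h1 : s ∈ P := subset_convexHull ℝ _ hsS
        nlinarith [hle s h1]
    have hle' : ∀ y ∈ P, (f + tstar • θ) y ≤ c + tstar * θ g₀ := by
      apply pp6_le_on_hull
      intro s hsS
      simpa using hkey s hsS
    have hGsub : G ⊆ {y ∈ P | (f + tstar • θ) y = c + tstar * θ g₀} := by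
      intro y hy
      refine ⟨hy.1, ?_⟩
      simp [hy.2, hθG y hy]
    obtain ⟨sm, hsmT, hsm⟩ := Finset.exists_mem_eq_inf' hTne (fun s => (c - f s) / (θ s - θ g₀))
    obtain ⟨hsmS, hsmθ⟩ := Finset.mem_filter.mp hsmT
    have hsmG' : sm ∈ {y ∈ P | (f + tstar • θ) y = c + tstar * θ g₀} := by
      refine ⟨subset_convexHull ℝ _ hsmS, ?_⟩
      have hpos : (0:ℝ) < θ sm - θ g₀ := by linarith
      have h2 : tstar * (θ sm - θ g₀) = c - f sm := by
        rw [htstar, hsm, div_mul_cancel₀ _ (ne_of_gt hpos)]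
      simp only [LinearMap.add_apply, LinearMap.smul_apply, smul_eq_mul]
      nlinarith
    have hsmG : sm ∉ G := fun h => absurd h.2 (ne_of_lt (hfltc sm hsmS hsmθ))
    by_cases hbad : ∀ s ∈ S, f s + tstar * θ s = c + tstar * θ g₀
    · exact Or.inr ⟨tstar, htpos, θ, hθsign, hbad⟩
    · push_neg at hbad
      obtain ⟨s₀, hs₀S, hs₀⟩ := hbad
      have hs₀lt : (f + tstar • θ) s₀ < c + tstar * θ g₀ := by
        have h := hkey s₀ hs₀S
        simp only [LinearMap.add_apply, LinearMap.smul_apply, smul_eq_mul]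
        rcases lt_or_eq_of_le h with h' | h'
        · exact h'
        · exact absurd h' hs₀
      refine Or.inl ⟨f + tstar • θ, c + tstar * θ g₀, hle', hGsub, ?_, ?_⟩
      · intro h
        exact hsmG (h ▸ hsmG')
      · intro h
        have : s₀ ∈ {y ∈ P | (f + tstar • θ) y = c + tstar * θ g₀} :=
          h.symm ▸ (subset_convexHull ℝ _ hs₀S : s₀ ∈ P)
        exact absurd this.2 (ne_of_lt hs₀lt)
  rcases rot φ₁ (hGconst φ₁ hφ₁A) (hnonconst φ₁ v₁ hv₁ h11) with good | ⟨t1, ht1, θ1, hθ1sign, hb1⟩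
  · exact good
  rcases rot φ₂ (hGconst φ₂ hφ₂A) (hnonconst φ₂ v₂ hv₂ h22) with good | ⟨t2, ht2, θ2, hθ2sign, hb2⟩
  · exact good
  exfalso
  have hχconst : ∀ s ∈ S, (t1 • θ1 - t2 • θ2) s = t1 * θ1 g₀ - t2 * θ2 g₀ := by
    intro s hsS
    have h1 := hb1 s hsS
    have h2 := hb2 s hsS
    simp only [LinearMap.sub_apply, LinearMap.smul_apply, smul_eq_mul]
    linarith
  have hz := hkill _ _ hχconst v₁ hv₁
  have hv00 : θ1 v₁ = 1 ∨ θ1 v₁ = -1 := by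
    rcases hθ1sign with rfl | rfl
    · left; exact h11
    · right; simp [h11]
  have hv01 : θ2 v₁ = 0 := by
    rcases hθ2sign with rfl | rfl
    · exact h21
    · simp [h21]
  simp only [LinearMap.sub_apply, LinearMap.smul_apply, smul_eq_mul, hv01, mul_zero,
    sub_zero] at hz
  rcases hv00 with h | h <;> rw [h] at hz <;> nlinarith

lemma pp6_facet_cover (S : Finset (Fin n → ℝ))
    (hG : IsFace (convexHull ℝ (S : Set (Fin n → ℝ))) G) (hne : G.Nonempty)
    (hGP : G ≠ convexHull ℝ (S : Set (Fin n → ℝ))) :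
    ∃ H, IsFacet (convexHull ℝ (S : Set (Fin n → ℝ))) H ∧ G ⊆ H := by
  set P := convexHull ℝ (S : Set (Fin n → ℝ)) with hPdef
  have hfaceP : IsFace P P := Or.inr (Or.inl rfl)
  suffices h : ∀ k (G : Set (Fin n → ℝ)), IsFace P G → G.Nonempty → G ≠ P →
      sdim P - sdim G ≤ k → ∃ H, IsFacet P H ∧ G ⊆ H by
    exact h (sdim P - sdim G) G hG hne hGP le_rfl
  intro k
  induction k with
  | zero =>
    intro G hG hne hGP hk
    have := pp6_sdim_lt hG hfaceP hne ⟨pp6_face_subset hG, fun h => hGP ((pp6_face_subset hG).antisymm h)⟩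
    omega
  | succ k ih =>
    intro G hG hne hGP hk
    have hlt : sdim G < sdim P :=
      pp6_sdim_lt hG hfaceP hne ⟨pp6_face_subset hG, fun h => hGP ((pp6_face_subset hG).antisymm h)⟩
    by_cases hfacet : sdim G + 1 = sdim P
    · exact ⟨G, ⟨hG, hne, hfacet⟩, subset_rfl⟩
    · have hdim2 : sdim G + 2 ≤ sdim P := by omega
      obtain ⟨f, c, hle, hGeq⟩ := pp6_face_exposed hG hne hGP
      rw [hGeq] at hdim2 hne hk ⊢
      obtain ⟨f', c', hle', hsub, hne', hne'P⟩ := pp6_step S f c hle hne hdim2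
      have hG'face : IsFace P {y ∈ P | f' y = c'} := Or.inr (Or.inr ⟨f', c', hle', rfl⟩)
      have hG'ne : {y ∈ P | f' y = c'}.Nonempty := hne.mono hsub
      have hGss : {y ∈ P | f y = c} ⊂ {y ∈ P | f' y = c'} := ⟨hsub, by
        intro h
        exact hne' (h.antisymm hsub)⟩
      have hlt2 : sdim {y ∈ P | f y = c} < sdim {y ∈ P | f' y = c'} :=
        pp6_sdim_lt (hGeq ▸ hG) hG'face hne hGss
      have hlt3 : sdim {y ∈ P | f' y = c'} < sdim P :=
        pp6_sdim_lt hG'face hfaceP hG'ne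
          ⟨fun y hy => hy.1, fun h => hne'P (Set.Subset.antisymm (fun y hy => hy.1) h)⟩
      obtain ⟨H, hH, hsubH⟩ := ih _ hG'face hG'ne hne'P (by omega)
      exact ⟨H, hH, hsub.trans hsubH⟩

lemma pp6_hdesc (S : Finset (Fin n → ℝ))
    (F : Set (Fin n → ℝ) → ((Fin n → ℝ) →ₗ[ℝ] ℝ)) (C : Set (Fin n → ℝ) → ℝ)
    (hFC : ∀ G, IsFacet (convexHull ℝ (S : Set (Fin n → ℝ))) G →
      (∀ z ∈ convexHull ℝ (S : Set (Fin n → ℝ)), F G z ≤ C G) ∧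
      G = {z ∈ convexHull ℝ (S : Set (Fin n → ℝ)) | F G z = C G})
    (hPne : (convexHull ℝ (S : Set (Fin n → ℝ))).Nonempty)
    {y : Fin n → ℝ} (hy : y ∈ affineSpan ℝ (convexHull ℝ (S : Set (Fin n → ℝ))))
    (hineq : ∀ G, IsFacet (convexHull ℝ (S : Set (Fin n → ℝ))) G → F G y ≤ C G) :
    y ∈ convexHull ℝ (S : Set (Fin n → ℝ)) := by
  classical
  set P := convexHull ℝ (S : Set (Fin n → ℝ)) with hPdef
  by_contra hyP
  -- relative interior point
  obtain ⟨p, hp⟩ := hPne.intrinsicInterior (convex_convexHull ℝ _)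
  have hpP : p ∈ P := intrinsicInterior_subset hp
  obtain ⟨ε, hε, hball⟩ := pp6_relint_ball hp
  have hPclosed : IsClosed P := S.finite_toSet.isClosed_convexHull ℝ
  have hypne : y - p ≠ 0 := fun h => hyP (by
    have : y = p := by
      have := sub_eq_zero.mp h
      exact this
    exact this ▸ hpP)
  have hydir : y - p ∈ vectorSpan ℝ P := by
    have h1 : y -ᵥ p ∈ (affineSpan ℝ P).direction :=
      AffineSubspace.vsub_mem_direction hy (subset_affineSpan ℝ P hpP)
    rwa [direction_affineSpan, vsub_eq_sub] at h1
  -- last point in P along the segment from p to y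
  set Cset : Set ℝ := {t | t ∈ Set.Icc (0:ℝ) 1 ∧ p + t • (y - p) ∈ P} with hCset
  have hC0 : (0:ℝ) ∈ Cset := ⟨⟨le_rfl, zero_le_one⟩, by simpa using hpP⟩
  have hCne : Cset.Nonempty := ⟨0, hC0⟩
  have hCbdd : BddAbove Cset := ⟨1, fun t ht => ht.1.2⟩
  have hCclosed : IsClosed Cset := by
    apply IsClosed.inter isClosed_Icc
    exact hPclosed.preimage (continuous_const.add (continuous_id.smul continuous_const))
  set tstar := sSup Cset with htstar
  have htC : tstar ∈ Cset := hCclosed.csSup_mem hCne hCbdd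
  set z := p + tstar • (y - p) with hz
  have hzP : z ∈ P := htC.2
  have ht1 : tstar < 1 := by
    rcases lt_or_eq_of_le htC.1.2 with h | h
    · exact h
    · exfalso; apply hyP
      have : z = y := by rw [hz, h]; module
      exact this ▸ hzP
  -- work in the subspace Vp
  set Vp := vectorSpan ℝ P with hVp
  set Q : Set ↥Vp := {q | p + ↑q ∈ P} with hQ
  have hQconv : Convex ℝ Q := by
    intro q1 hq1 q2 hq2 a b ha hb hab
    show p + ↑(a • q1 + b • q2) ∈ P
    have key : p + ((a • q1 + b • q2 : ↥Vp) : Fin n → ℝ) =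
        a • (p + ↑q1) + b • (p + ↑q2) := by
      push_cast
      calc p + (a • (q1 : Fin n → ℝ) + b • (q2 : Fin n → ℝ))
          = (a + b) • p + (a • (q1 : Fin n → ℝ) + b • (q2 : Fin n → ℝ)) := by
            rw [hab, one_smul]
        _ = a • (p + ↑q1) + b • (p + ↑q2) := by module
    rw [key]
    exact (convex_convexHull ℝ _) hq1 hq2 ha hb hab
  have h0Q : (0 : ↥Vp) ∈ interior Q := by
    rw [mem_interior]
    refine ⟨Metric.ball 0 ε, ?_, Metric.isOpen_ball, Metric.mem_ball_self hε⟩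
    intro q hq
    have h1 : ‖q‖ < ε := by simpa using mem_ball_zero_iff.mp hq
    rw [Submodule.coe_norm] at h1
    exact hball _ q.2 h1
  have hzdir : z - p ∈ Vp := by
    rw [hz]
    have : p + tstar • (y - p) - p = tstar • (y - p) := by abel
    rw [this]
    exact Submodule.smul_mem _ _ hydir
  set zhat : ↥Vp := ⟨z - p, hzdir⟩ with hzhat
  have hzQ : zhat ∈ Q := by
    show p + (z - p) ∈ P
    rw [show p + (z - p) = z from by abel]
    exact hzP
  have hznotint : zhat ∉ interior Q := by
    intro hint
    rw [mem_interior] at hint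
    obtain ⟨U, hUQ, hUopen, hzU⟩ := hint
    obtain ⟨δ, hδ, hballU⟩ := Metric.isOpen_iff.mp hUopen _ hzU
    set s : ℝ := min (δ / (2 * ‖y - p‖)) (1 - tstar) with hs
    have hypos : 0 < ‖y - p‖ := norm_pos_iff.mpr hypne
    have hspos : 0 < s := lt_min (by positivity) (by linarith)
    have hs1 : tstar + s ≤ 1 := by
      have := min_le_right (δ / (2 * ‖y - p‖)) (1 - tstar)
      rw [hs]; linarith
    set q : ↥Vp := zhat + ⟨s • (y - p), Submodule.smul_mem _ _ hydir⟩ with hq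
    have hqU : q ∈ U := by
      apply hballU
      rw [Metric.mem_ball, dist_eq_norm]
      have : q - zhat = ⟨s • (y - p), Submodule.smul_mem _ _ hydir⟩ := by
        rw [hq]; abel
      rw [this]
      have hnorm : ‖(⟨s • (y - p), Submodule.smul_mem _ _ hydir⟩ : ↥Vp)‖ = s * ‖y - p‖ := by
        rw [← Submodule.norm_coe]
        simp [norm_smul, abs_of_pos hspos]
      rw [hnorm]
      have hle2 : s ≤ δ / (2 * ‖y - p‖) := min_le_left _ _
      rw [le_div_iff₀ (by positivity)] at hle2
      nlinarith
    have hqQ : q ∈ Q := hUQ hqU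
    have : p + ↑q ∈ P := hqQ
    have hcoe : (q : Fin n → ℝ) = (z - p) + s • (y - p) := rfl
    have hform : p + (q : Fin n → ℝ) = p + (tstar + s) • (y - p) := by
      rw [hcoe, hz]
      module
    have hmem : tstar + s ∈ Cset := ⟨⟨by linarith [htC.1.1], hs1⟩, hform ▸ this⟩
    have := le_csSup hCbdd hmem
    linarith
  -- separation
  obtain ⟨fhat, hfhat⟩ := geometric_hahn_banach_open_point (hQconv.interior) isOpen_interior
    hznotint
  have hf0 : (0:ℝ) < fhat zhat := by
    have := hfhat _ h0Q
    simpa using this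
  have hQle : ∀ q ∈ Q, fhat q ≤ fhat zhat := by
    intro q hq
    by_contra hcon
    push_neg at hcon
    have hfq : 0 < fhat q := lt_trans hf0 hcon
    set t : ℝ := (fhat zhat + fhat q) / (2 * fhat q) with ht
    have ht0 : 0 < t := by positivity
    have ht1' : t < 1 := by
      rw [ht, div_lt_one (by positivity)]
      linarith
    have hmem : t • q ∈ interior Q := by
      have := hQconv.openSegment_interior_closure_subset_interior h0Q (subset_closure hq)
      have hseg : t • q ∈ openSegment ℝ (0 : ↥Vp) q := by
        rw [openSegment_eq_image]
        exact ⟨t, ⟨ht0, ht1'⟩, by simp⟩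
      exact this hseg
    have := hfhat _ hmem
    rw [map_smul] at this
    simp only [smul_eq_mul] at this
    have h2 : t * fhat q = (fhat zhat + fhat q) / 2 := by
      rw [ht]; field_simp
    rw [h2] at this
    linarith
  -- ambient functional
  obtain ⟨K, hK⟩ := Submodule.exists_isCompl Vp
  set proj := Vp.linearProjOfIsCompl K hK with hproj
  set F₀ : (Fin n → ℝ) →ₗ[ℝ] ℝ := (fhat : ↥Vp →ₗ[ℝ] ℝ).comp proj with hF₀
  have hprojVp : ∀ (w : ↥Vp), proj (w : Fin n → ℝ) = w :=
    fun w => Submodule.linearProjOfIsCompl_apply_left hK w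
  have hFval : ∀ (q : Fin n → ℝ) (hqv : q - p ∈ Vp), F₀ q = F₀ p + fhat ⟨q - p, hqv⟩ := by
    intro q hqv
    have h1 : F₀ q = F₀ p + F₀ (q - p) := by
      rw [← map_add]
      congr 1
      abel
    rw [h1]
    congr 1
    rw [hF₀]
    simp only [LinearMap.comp_apply]
    rw [hprojVp ⟨q - p, hqv⟩]
    rfl
  have hqdir : ∀ q ∈ P, q - p ∈ Vp := by
    intro q hq
    have h1 : q -ᵥ p ∈ (affineSpan ℝ P).direction :=
      AffineSubspace.vsub_mem_direction (subset_affineSpan ℝ P hq) (subset_affineSpan ℝ P hpP)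
    rwa [direction_affineSpan, vsub_eq_sub] at h1
  have hFz : F₀ z = F₀ p + fhat zhat := hFval z hzdir
  have hle₀ : ∀ q ∈ P, F₀ q ≤ F₀ z := by
    intro q hq
    have hqQ : (⟨q - p, hqdir q hq⟩ : ↥Vp) ∈ Q := by
      show p + (q - p) ∈ P
      rw [show p + (q - p) = q from by abel]
      exact hq
    rw [hFval q (hqdir q hq), hFz]
    linarith [hQle _ hqQ]
  have hplt : F₀ p < F₀ z := by
    rw [hFz]
    have : (⟨p - p, by simp [Submodule.zero_mem]⟩ : ↥Vp) = 0 := by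
      ext; simp
    linarith
  -- the supporting face and a facet containing it
  have hG₀face : IsFace P {w ∈ P | F₀ w = F₀ z} := Or.inr (Or.inr ⟨F₀, F₀ z, hle₀, rfl⟩)
  have hG₀ne : {w ∈ P | F₀ w = F₀ z}.Nonempty := ⟨z, hzP, rfl⟩
  have hG₀P : {w ∈ P | F₀ w = F₀ z} ≠ P := by
    intro h
    have : p ∈ {w ∈ P | F₀ w = F₀ z} := h.symm ▸ hpP
    exact absurd this.2 (ne_of_lt hplt)
  obtain ⟨H, hHfacet, hsubH⟩ := pp6_facet_cover S hG₀face hG₀ne hG₀P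
  obtain ⟨hleH, hHeq⟩ := hFC H hHfacet
  have hzH : F H z = C H := by
    have : z ∈ H := hsubH ⟨hzP, rfl⟩
    rw [hHeq] at this
    exact this.2
  have hpH : F H p < C H := by
    rcases lt_or_eq_of_le (hleH p hpP) with h | h
    · exact h
    · exfalso
      have hall : ∀ q ∈ P, F H q = C H := fun q hq => pp6_relint_const hleH hp h hq
      have : H = P := by
        rw [hHeq]
        exact Set.Subset.antisymm (fun w hw => hw.1) (fun w hw => ⟨hw, hall w hw⟩)
      have hcontra := hHfacet.2.2
      rw [this] at hcontra
      rw [← hPdef] at hcontra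
      omega
  have hyH : F H y ≤ C H := hineq H hHfacet
  have hcomp : F H z = F H p + tstar * (F H y - F H p) := by
    rw [hz]
    simp only [map_add, map_smul, map_sub, smul_eq_mul]
  have ht0 : 0 ≤ tstar := htC.1.1
  nlinarith

lemma pp6_vertex_mem {v : Fin n → ℝ} (hv : IsVertex P v) : v ∈ P := by
  rcases hv with h | h | ⟨f, c, hle, heq⟩
  · exact absurd h (by simp)
  · rw [← h]; exact rfl
  · have : v ∈ {x ∈ P | f x = c} := heq ▸ rfl
    exact this.1

lemma pp6_facets_finite (S : Finset (Fin n → ℝ)) :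
    {G | IsFacet (convexHull ℝ (S : Set (Fin n → ℝ))) G}.Finite := by
  classical
  apply Set.Finite.subset (((S.powerset : Finset (Finset (Fin n → ℝ))) : Set (Finset (Fin n → ℝ))).toFinite.image
    (fun T : Finset (Fin n → ℝ) => convexHull ℝ (T : Set (Fin n → ℝ))))
  rintro G ⟨hface, hne, hdim⟩
  have hGP : G ≠ convexHull ℝ (S : Set (Fin n → ℝ)) := by
    intro h; rw [h] at hdim; omega
  obtain ⟨f, c, hle, hGeq⟩ := pp6_face_exposed hface hne hGP
  refine ⟨S.filter (fun s => f s = c), Finset.mem_coe.mpr (Finset.mem_powerset.mpr (S.filter_subset _)), ?_⟩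
  rw [hGeq, pp6_face_eq_hull_filter S f c (fun s hs => hle s (subset_convexHull ℝ _ hs))]
  congr 1
  ext s
  simp [Finset.mem_filter]

lemma pp6_rank_ge (Vp : Submodule ℝ (Fin n → ℝ)) (Ff : Set (Fin n → ℝ) → ((Fin n → ℝ) →ₗ[ℝ] ℝ))
    (T : Finset (Set (Fin n → ℝ))) :
    Module.finrank ℝ Vp ≤
      Module.finrank ℝ ↥(Vp ⊓ T.inf (fun G => LinearMap.ker (Ff G))) + T.card := by
  classical
  induction T using Finset.induction_on with
  | empty =>
    rw [Finset.inf_empty, inf_top_eq]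
    simp
  | @insert G T hGT ih =>
    have heq : Vp ⊓ (insert G T).inf (fun G => LinearMap.ker (Ff G)) =
        (Vp ⊓ T.inf (fun G => LinearMap.ker (Ff G))) ⊓ LinearMap.ker (Ff G) := by
      rw [Finset.inf_insert]
      rw [inf_comm (LinearMap.ker (Ff G)), inf_assoc]
    rw [heq, Finset.card_insert_of_notMem hGT]
    have := pp6_subrank (Vp ⊓ T.inf (fun G => LinearMap.ker (Ff G))) (Ff G)
    omega

lemma pp6_eq_of_mem_of_ncard_le_one {α : Type*} {s : Set α} (hs : s.Finite) (h1 : s.ncard ≤ 1)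
    {a b : α} (ha : a ∈ s) (hb : b ∈ s) : a = b := by
  by_contra hne
  have hsub : ({a, b} : Set α) ⊆ s := by rintro y (rfl | rfl) <;> assumption
  have := Set.ncard_le_ncard hsub hs
  rw [Set.ncard_pair hne] at this
  omega

end Poly6Aux

theorem stmt6 {n d : ℕ} (hd : 1 < d) (P : Set (Fin n → ℝ))
    (hP : IsPolytope P) (hdim : sdim P = d) (hsimple : IsSimplePolytope P)
    (u v : Fin n → ℝ) (hu : IsVertex P u) (hv : IsVertex P v)
    (F : Set (Fin n → ℝ)) (hF : IsFacet P F) (huF : u ∈ F) (hvF : v ∈ F)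
    (huniq : ∀ G, IsFacet P G → u ∈ G → v ∈ G → G = F)
    (x : Fin n → ℝ) (hx : IsVertex P x) (hadj : Adjacent P v x) (hxF : x ∉ F) :
    {G | IsFacet P G ∧ (u ∈ G ∨ segment ℝ v x ⊆ G)} =
      {G | IsFacet P G ∧ (u ∈ G ∨ v ∈ G)} ∧
    {G | IsFacet P G ∧ (u ∈ G ∨ segment ℝ v x ⊆ G)}.ncard = 2 * d - 1 := by
  classical
  obtain ⟨S, rfl⟩ := hP
  set P := convexHull ℝ (S : Set (Fin n → ℝ)) with hPdef
  have hPconv : Convex ℝ P := convex_convexHull ℝ _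
  have hxP : x ∈ P := pp6_vertex_mem hx
  have hvP : v ∈ P := pp6_vertex_mem hv
  have huP : u ∈ P := pp6_face_subset hF.1 huF
  have hPne : P.Nonempty := ⟨v, hvP⟩
  -- choice of facet presentations
  have hfc : ∀ G : Set (Fin n → ℝ), ∃ fc : ((Fin n → ℝ) →ₗ[ℝ] ℝ) × ℝ, IsFacet P G →
      (∀ z ∈ P, fc.1 z ≤ fc.2) ∧ G = {z ∈ P | fc.1 z = fc.2} := by
    intro G
    by_cases h : IsFacet P G
    · have hGP : G ≠ P := by
        intro e; have h2 := h.2.2; rw [e] at h2; omega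
      obtain ⟨f0, c0, hle0, heq0⟩ := pp6_face_exposed h.1 h.2.1 hGP
      exact ⟨(f0, c0), fun _ => ⟨hle0, heq0⟩⟩
    · exact ⟨(0, 0), fun hh => absurd hh h⟩
  choose fc hFC' using hfc
  set Ff : Set (Fin n → ℝ) → ((Fin n → ℝ) →ₗ[ℝ] ℝ) := fun G => (fc G).1 with hFf
  set Cc : Set (Fin n → ℝ) → ℝ := fun G => (fc G).2 with hCc
  have hFC : ∀ G, IsFacet P G → (∀ z ∈ P, Ff G z ≤ Cc G) ∧ G = {z ∈ P | Ff G z = Cc G} :=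
    fun G hG => hFC' G hG
  -- edge data
  obtain ⟨hvxne, E, hE, hvE, hxE⟩ := hadj
  have hEface := hE.1
  have hEne : E.Nonempty := ⟨v, hvE⟩
  have hEP : E ≠ P := by
    intro e; have h2 := hE.2; rw [e, hdim] at h2; omega
  obtain ⟨g, e, hgle, hEeq⟩ := pp6_face_exposed hEface hEne hEP
  have hEconv : Convex ℝ E := pp6_face_convex hPconv hEface
  -- midpoint
  set m := (1/2 : ℝ) • v + (1/2 : ℝ) • x with hm
  have hmE : m ∈ E := hEconv hvE hxE (by norm_num) (by norm_num) (by norm_num)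
  have hmP : m ∈ P := pp6_face_subset hEface hmE
  -- membership characterization at midpoint
  have hm_iff : ∀ G, IsFacet P G → (m ∈ G ↔ v ∈ G ∧ x ∈ G) := by
    intro G hG
    obtain ⟨hleG, heqG⟩ := hFC G hG
    constructor
    · intro hmG
      have h1 : Ff G m = Cc G := (heqG ▸ hmG).2
      have h2 : Ff G m = (1/2) * Ff G v + (1/2) * Ff G x := by
        rw [hm]; simp [map_add, map_smul]
      have h3 := hleG v hvP
      have h4 := hleG x hxP
      exact ⟨by rw [heqG]; exact ⟨hvP, by linarith⟩, by rw [heqG]; exact ⟨hxP, by linarith⟩⟩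
    · rintro ⟨h1, h2⟩
      exact (pp6_face_convex hPconv hG.1) h1 h2 (by norm_num) (by norm_num) (by norm_num)
  -- facet collections
  have hfin := pp6_facets_finite S
  set Av := {G | IsFacet P G ∧ v ∈ G} with hAvdef
  set Au := {G | IsFacet P G ∧ u ∈ G} with hAudef
  set Mm := {G | IsFacet P G ∧ m ∈ G} with hMmdef
  have hAvfin : Av.Finite := hfin.subset fun G hG => hG.1
  have hAufin : Au.Finite := hfin.subset fun G hG => hG.1
  have hMmfin : Mm.Finite := hfin.subset fun G hG => hG.1
  have hAvcard : Av.ncard = d := by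
    have := hsimple v hv
    rw [hdim] at this
    exact this
  have hAucard : Au.ncard = d := by
    have := hsimple u hu
    rw [hdim] at this
    exact this
  -- rank bound on the intersection of kernels
  set Tm := hMmfin.toFinset with hTmdef
  have hcardTm : Tm.card = Mm.ncard := (Set.ncard_eq_toFinset_card Mm hMmfin).symm
  set W := (vectorSpan ℝ P) ⊓ Tm.inf (fun G => LinearMap.ker (Ff G)) with hWdef
  have hrank : Module.finrank ℝ ↥(vectorSpan ℝ P) ≤ Module.finrank ℝ ↥W + Tm.card :=
    pp6_rank_ge (vectorSpan ℝ P) Ff Tm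
  -- epsilon for facets not containing m
  set Nm := hfin.toFinset.filter (fun G => m ∉ G) with hNmdef
  set ε := if h : Nm.Nonempty then
      Nm.inf' h (fun G => (Cc G - Ff G m) / (‖LinearMap.toContinuousLinearMap (Ff G)‖ + 1))
    else 1 with hεdef
  have hNmlt : ∀ G ∈ Nm, Ff G m < Cc G := by
    intro G hG
    obtain ⟨hG1, hG2⟩ := Finset.mem_filter.mp hG
    have hGfacet : IsFacet P G := hfin.mem_toFinset.mp hG1
    obtain ⟨hleG, heqG⟩ := hFC G hGfacet
    exact lt_of_le_of_ne (hleG m hmP) (fun h => hG2 (heqG ▸ ⟨hmP, h⟩))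
  have hεpos : 0 < ε := by
    rw [hεdef]
    split_ifs with h
    · rw [Finset.lt_inf'_iff]
      intro G hG
      have := hNmlt G hG
      have hn : (0:ℝ) ≤ ‖LinearMap.toContinuousLinearMap (Ff G)‖ := norm_nonneg _
      apply div_pos (by linarith) (by linarith)
    · norm_num
  have hεbound : ∀ G ∈ Nm, ∀ w : Fin n → ℝ, ‖w‖ < ε → Ff G (m + w) ≤ Cc G := by
    intro G hG w hw
    have hlt := hNmlt G hG
    have hNe : Nm.Nonempty := ⟨G, hG⟩
    have hεle : ε ≤ (Cc G - Ff G m) / (‖LinearMap.toContinuousLinearMap (Ff G)‖ + 1) := by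
      rw [hεdef, dif_pos hNe]
      exact Finset.inf'_le _ hG
    set fG := LinearMap.toContinuousLinearMap (Ff G) with hfG
    have hb1 : |Ff G w| ≤ ‖fG‖ * ‖w‖ := by
      have := fG.le_opNorm w
      rwa [Real.norm_eq_abs] at this
      -- note: fG w = Ff G w definitionally
    have hn : (0:ℝ) ≤ ‖fG‖ := norm_nonneg _
    rw [le_div_iff₀ (by linarith)] at hεle
    have hb2 : ‖fG‖ * ‖w‖ ≤ ‖fG‖ * ε := mul_le_mul_of_nonneg_left (le_of_lt hw) hn
    have hb3 : ‖fG‖ * ε < (‖fG‖ + 1) * ε := by nlinarith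
    have habs : Ff G w ≤ |Ff G w| := le_abs_self _
    rw [map_add]
    nlinarith [mul_comm ε (‖fG‖ + 1)]
  -- moving within W keeps us in P, then in E
  have hPmove : ∀ w ∈ W, ‖w‖ < ε → m + w ∈ P := by
    intro w hwW hwε
    have hwVp : w ∈ vectorSpan ℝ P := (Submodule.mem_inf.mp hwW).1
    have haff : m + w ∈ affineSpan ℝ P := by
      have h1 : w ∈ (affineSpan ℝ P).direction := by
        rw [direction_affineSpan]; exact hwVp
      have h2 := AffineSubspace.vadd_mem_of_mem_direction h1 (subset_affineSpan ℝ P hmP)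
      simpa [vadd_eq_add, add_comm] using h2
    apply pp6_hdesc S Ff Cc hFC hPne haff
    intro G hG
    by_cases hmG : m ∈ G
    · have hGTm : G ∈ Tm := hMmfin.mem_toFinset.mpr ⟨hG, hmG⟩
      have hle2 : Tm.inf (fun G => LinearMap.ker (Ff G)) ≤ LinearMap.ker (Ff G) :=
        Finset.inf_le hGTm
      have hker : w ∈ LinearMap.ker (Ff G) := hle2 ((Submodule.mem_inf.mp hwW).2)
      have hz : Ff G w = 0 := hker
      have hmc : Ff G m = Cc G := ((hFC G hG).2 ▸ hmG).2
      rw [map_add, hz, hmc, add_zero]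
    · exact hεbound G (Finset.mem_filter.mpr ⟨hfin.mem_toFinset.mpr hG, hmG⟩) w hwε
  have hEmove : ∀ w ∈ W, ‖w‖ < ε → m + w ∈ E := by
    intro w hwW hwε
    have h1 := hPmove w hwW hwε
    have h2 := hPmove (-w) (neg_mem hwW) (by simpa using hwε)
    have hge : g m = e := (hEeq ▸ hmE).2
    have e1 := hgle _ h1
    have e2 := hgle _ h2
    have hsum : g (m + w) + g (m + -w) = 2 * e := by
      simp only [map_add, map_neg]
      linarith
    rw [hEeq]
    exact ⟨h1, by linarith⟩
  have hWle : W ≤ vectorSpan ℝ E := by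
    intro w hw
    rcases eq_or_ne w 0 with rfl | hw0
    · exact Submodule.zero_mem _
    · have hnorm : 0 < ‖w‖ := norm_pos_iff.mpr hw0
      set w' := (ε / (2 * ‖w‖)) • w with hw'def
      have hw'W : w' ∈ W := Submodule.smul_mem _ _ hw
      have hw'ε : ‖w'‖ < ε := by
        rw [hw'def, norm_smul, Real.norm_eq_abs, abs_of_pos (by positivity)]
        have heq2 : ε / (2 * ‖w‖) * ‖w‖ = ε / 2 := by
          field_simp
        rw [heq2]
        linarith
      have h1 := hEmove w' hw'W hw'ε
      have h2 := hEmove (-w') (neg_mem hw'W) (by simpa using hw'ε)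
      have hdiff : (m + w') -ᵥ (m + -w') ∈ vectorSpan ℝ E := vsub_mem_vectorSpan ℝ h1 h2
      have heq3 : (m + w') -ᵥ (m + -w') = (2:ℝ) • w' := by
        rw [vsub_eq_sub]
        module
      rw [heq3] at hdiff
      have heq4 : w = (‖w‖ / ε) • ((2:ℝ) • w') := by
        rw [hw'def, smul_smul, smul_smul,
          show ‖w‖ / ε * 2 * (ε / (2 * ‖w‖)) = 1 by field_simp, one_smul]
      rw [heq4]
      exact Submodule.smul_mem _ _ hdiff
  have hWrank : Module.finrank ℝ ↥W ≤ 1 := by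
    have h1 : Module.finrank ℝ ↥W ≤ Module.finrank ℝ ↥(vectorSpan ℝ E) :=
      Submodule.finrank_mono hWle
    have h2 : Module.finrank ℝ ↥(vectorSpan ℝ E) = 1 := hE.2
    omega
  have hk : d ≤ 1 + Mm.ncard := by
    have h0 : Module.finrank ℝ ↥(vectorSpan ℝ P) = d := by rw [← hdim]; rfl
    omega
  -- key uniqueness: only F contains v but not x
  have hMmAv : Mm ⊆ Av := fun G hG => ⟨hG.1, ((hm_iff G hG.1).mp hG.2).1⟩
  have hFMm : F ∉ Mm := fun h => hxF ((hm_iff F hF).mp h.2).2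
  have hdiffcard : (Av \ Mm).ncard ≤ 1 := by
    rw [Set.ncard_diff hMmAv hMmfin]
    omega
  have hkey : ∀ G, IsFacet P G → v ∈ G → x ∉ G → G = F := by
    intro G hG hvG hxG
    have hGd : G ∈ Av \ Mm := ⟨⟨hG, hvG⟩, fun h => hxG ((hm_iff G hG).mp h.2).2⟩
    have hFd : F ∈ Av \ Mm := ⟨⟨hF, hvF⟩, hFMm⟩
    exact pp6_eq_of_mem_of_ncard_le_one (hAvfin.diff (t := Mm)) hdiffcard hGd hFd
  -- set equality
  have hseteq : {G | IsFacet P G ∧ (u ∈ G ∨ segment ℝ v x ⊆ G)} =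
      {G | IsFacet P G ∧ (u ∈ G ∨ v ∈ G)} := by
    ext G
    simp only [Set.mem_setOf_eq]
    constructor
    · rintro ⟨hG, h | h⟩
      · exact ⟨hG, Or.inl h⟩
      · exact ⟨hG, Or.inr (h (left_mem_segment ℝ v x))⟩
    · rintro ⟨hG, h | h⟩
      · exact ⟨hG, Or.inl h⟩
      · by_cases hu' : u ∈ G
        · exact ⟨hG, Or.inl hu'⟩
        · by_cases hxG : x ∈ G
          · exact ⟨hG, Or.inr ((pp6_face_convex hPconv hG.1).segment_subset h hxG)⟩
          · exact absurd ((hkey G hG h hxG) ▸ huF) hu'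
  -- counting
  have hunion : {G | IsFacet P G ∧ (u ∈ G ∨ v ∈ G)} = Au ∪ Av := by
    ext G
    simp only [Set.mem_setOf_eq, Set.mem_union, hAudef, hAvdef]
    tauto
  have hinter : Au ∩ Av = {F} := by
    ext G
    simp only [Set.mem_inter_iff, Set.mem_singleton_iff, hAudef, hAvdef, Set.mem_setOf_eq]
    constructor
    · rintro ⟨⟨hG, huG⟩, ⟨_, hvG⟩⟩
      exact huniq G hG huG hvG
    · rintro rfl
      exact ⟨⟨hF, huF⟩, ⟨hF, hvF⟩⟩
  have hcount := Set.ncard_union_add_ncard_inter Au Av hAufin hAvfin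
  rw [hinter, Set.ncard_singleton, hAucard, hAvcard] at hcount
  refine ⟨hseteq, ?_⟩
  rw [hseteq, hunion]
  omega
end
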